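/- arXiv:2510.22393 — 3 statements merged into one kernel-verified Lean document; each statement's English description precedes it below -/
import Mathlib

section
/- Let 1 ≤ p < n and suppose δ_p := λ_p − λ_{p+1} > 0. Then ‖Π̃_p − Π_p‖ ≤ π‖E‖/δ_p. -/
open Matrix
open scoped Matrix.Norms.L2Operator

/-- The spectral norm (ℓ²→ℓ² operator norm) of a matrix. -/
noncomputable def specNorm {𝕜 : Type*} [RCLike 𝕜] {m n : ℕ}
    (M : Matrix (Fin m) (Fin n) 𝕜) : ℝ :=
  ‖LinearMap.toContinuousLinearMap (Matrix.toEuclideanLin M)‖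


lemma specNorm_eq {n m : ℕ} (M : Matrix (Fin m) (Fin n) ℝ) : specNorm M = ‖M‖ := rfl

section toolkit
variable {n : ℕ}

lemma enorm_sq (z : Fin n → ℝ) :
    ‖((WithLp.equiv 2 (Fin n → ℝ)).symm z)‖ ^ 2 = z ⬝ᵥ z := by
  rw [← real_inner_self_eq_norm_sq]
  simp [inner, dotProduct]

lemma dot_eq_inner (x y : Fin n → ℝ) :
    x ⬝ᵥ y = inner ℝ ((WithLp.equiv 2 (Fin n → ℝ)).symm x) ((WithLp.equiv 2 (Fin n → ℝ)).symm y) := by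
  simp [inner, dotProduct, mul_comm]

lemma norm_le_of_sq {M : Matrix (Fin n) (Fin n) ℝ} {c : ℝ} (hc : 0 ≤ c)
    (h : ∀ x : Fin n → ℝ, (M *ᵥ x) ⬝ᵥ (M *ᵥ x) ≤ c ^ 2 * (x ⬝ᵥ x)) : ‖M‖ ≤ c := by
  rw [Matrix.l2_opNorm_def]
  apply ContinuousLinearMap.opNorm_le_bound _ hc
  intro x
  have h2 : (LinearMap.toContinuousLinearMap (Matrix.toEuclideanLin M)) x
      = (WithLp.equiv 2 (Fin n → ℝ)).symm (M *ᵥ (WithLp.equiv 2 (Fin n → ℝ)) x) := by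
    rfl
  set y := (WithLp.equiv 2 (Fin n → ℝ)) x with hy
  have hx : x = (WithLp.equiv 2 (Fin n → ℝ)).symm y := rfl
  have h3 : ‖(LinearMap.toContinuousLinearMap (Matrix.toEuclideanLin M)) x‖ ^ 2
      ≤ (c * ‖x‖) ^ 2 := by
    rw [h2, enorm_sq]
    calc (M *ᵥ y) ⬝ᵥ (M *ᵥ y) ≤ c ^ 2 * (y ⬝ᵥ y) := h y
    _ = (c * ‖x‖) ^ 2 := by rw [hx, ← enorm_sq y]; ring
  have h4 : ‖(LinearMap.toContinuousLinearMap (Matrix.toEuclideanLin M)) x‖ ≤ c * ‖x‖ := by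
    have := Real.sqrt_le_sqrt h3
    rwa [Real.sqrt_sq (norm_nonneg _), Real.sqrt_sq (by positivity)] at this
  exact h4

lemma dot_mulVec_abs_le (M : Matrix (Fin n) (Fin n) ℝ) (x : Fin n → ℝ) :
    |x ⬝ᵥ (M *ᵥ x)| ≤ ‖M‖ * (x ⬝ᵥ x) := by
  rw [dot_eq_inner]
  calc |inner ℝ ((WithLp.equiv 2 (Fin n → ℝ)).symm x) ((WithLp.equiv 2 (Fin n → ℝ)).symm (M *ᵥ x))|
      ≤ ‖(WithLp.equiv 2 (Fin n → ℝ)).symm x‖ * ‖(WithLp.equiv 2 (Fin n → ℝ)).symm (M *ᵥ x)‖ :=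
        abs_real_inner_le_norm _ _
    _ ≤ ‖(WithLp.equiv 2 (Fin n → ℝ)).symm x‖ * (‖M‖ * ‖(WithLp.equiv 2 (Fin n → ℝ)).symm x‖) := by
        gcongr
        exact M.l2_opNorm_mulVec _
    _ = ‖M‖ * (x ⬝ᵥ x) := by rw [← enorm_sq x]; ring
end toolkit

section toolkit2
variable {n : ℕ}

lemma norm_diagonal_le {d : Fin n → ℝ} {m : ℝ} (hm : 0 ≤ m) (h : ∀ i, |d i| ≤ m) :
    ‖Matrix.diagonal d‖ ≤ m := by
  apply norm_le_of_sq hm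
  intro x
  simp only [Matrix.mulVec_diagonal, dotProduct]
  rw [Finset.mul_sum]
  apply Finset.sum_le_sum
  intro i _
  have h1 := abs_le.mp (h i)
  have hd2 : d i * d i ≤ m * m := by nlinarith [h1.1, h1.2]
  have hx2 : (0:ℝ) ≤ x i * x i := mul_self_nonneg _
  calc d i * x i * (d i * x i) = (d i * d i) * (x i * x i) := by ring
  _ ≤ (m * m) * (x i * x i) := by exact mul_le_mul_of_nonneg_right hd2 hx2
  _ = m ^ 2 * (x i * x i) := by ring

lemma norm_le_one_of_orth {M : Matrix (Fin n) (Fin n) ℝ} (h : Mᵀ * M = 1) : ‖M‖ ≤ 1 := by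
  apply norm_le_of_sq zero_le_one
  intro x
  have : (M *ᵥ x) ⬝ᵥ (M *ᵥ x) = x ⬝ᵥ ((Mᵀ * M) *ᵥ x) := by
    rw [← Matrix.mulVec_mulVec, Matrix.dotProduct_mulVec x, ← Matrix.mulVec_transpose]
    exact (dotProduct_comm _ _)
  rw [this, h]
  simp
end toolkit2

section core
variable {n : ℕ}

lemma core_sylvester {d₁ d₂ : Fin n → ℝ} {R G : Matrix (Fin n) (Fin n) ℝ} {c K γ : ℝ}
    (hγ : 0 < γ) (hK : γ/2 ≤ K)
    (h1 : ∀ i, c - K ≤ d₁ i ∧ d₁ i ≤ c - γ/2)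
    (h2 : ∀ i, c + γ/2 ≤ d₂ i ∧ d₂ i ≤ c + K)
    (heq : R * Matrix.diagonal d₂ - Matrix.diagonal d₁ * R = G) :
    γ * ‖R‖ ≤ ‖G‖ := by
  set N₁ := Matrix.diagonal (fun i => K + d₁ i - c) with hN₁def
  set N₂ := Matrix.diagonal (fun i => K - d₂ i + c) with hN₂def
  have hkey : (2*K) • R = N₁ * R + R * N₂ + G := by
    ext i j
    have hG : (R * Matrix.diagonal d₂ - Matrix.diagonal d₁ * R) i j = G i j := by rw [heq]
    simp only [Matrix.sub_apply, Matrix.mul_diagonal, Matrix.diagonal_mul] at hG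
    simp only [Matrix.smul_apply, Matrix.add_apply, Matrix.mul_diagonal, Matrix.diagonal_mul,
      hN₁def, hN₂def, smul_eq_mul, ← hG]
    ring
  have hN₁ : ‖N₁‖ ≤ K - γ/2 :=
    norm_diagonal_le (by linarith)
      (fun i => abs_le.mpr ⟨by linarith [(h1 i).1], by linarith [(h1 i).2]⟩)
  have hN₂ : ‖N₂‖ ≤ K - γ/2 :=
    norm_diagonal_le (by linarith)
      (fun i => abs_le.mpr ⟨by linarith [(h2 i).2], by linarith [(h2 i).1]⟩)
  have hRnn : 0 ≤ ‖R‖ := norm_nonneg _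
  have h5 : (2*K) * ‖R‖ = ‖(2*K) • R‖ := by
    rw [norm_smul, Real.norm_eq_abs, abs_of_nonneg (by linarith)]
  have h6 : ‖N₁ * R + R * N₂ + G‖ ≤ (K - γ/2) * ‖R‖ + ‖R‖ * (K - γ/2) + ‖G‖ := by
    calc ‖N₁ * R + R * N₂ + G‖ ≤ ‖N₁ * R + R * N₂‖ + ‖G‖ := norm_add_le _ _
    _ ≤ ‖N₁ * R‖ + ‖R * N₂‖ + ‖G‖ := by linarith [norm_add_le (N₁ * R) (R * N₂)]
    _ ≤ (K - γ/2) * ‖R‖ + ‖R‖ * (K - γ/2) + ‖G‖ := by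
        have a1 := Matrix.l2_opNorm_mul N₁ R
        have a2 := Matrix.l2_opNorm_mul R N₂
        have b1 : ‖N₁ * R‖ ≤ (K - γ/2) * ‖R‖ :=
          a1.trans (mul_le_mul_of_nonneg_right hN₁ hRnn)
        have b2 : ‖R * N₂‖ ≤ ‖R‖ * (K - γ/2) :=
          a2.trans (mul_le_mul_of_nonneg_left hN₂ hRnn)
        linarith
  rw [hkey] at h5
  nlinarith [h5, h6]

lemma core_sylvester' {d₁ d₂ : Fin n → ℝ} {R G : Matrix (Fin n) (Fin n) ℝ} {c K γ : ℝ}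
    (hγ : 0 < γ) (hK : γ/2 ≤ K)
    (h1 : ∀ i, c - K ≤ d₁ i ∧ d₁ i ≤ c - γ/2)
    (h2 : ∀ i, c + γ/2 ≤ d₂ i ∧ d₂ i ≤ c + K)
    (heq : Matrix.diagonal d₂ * R - R * Matrix.diagonal d₁ = G) :
    γ * ‖R‖ ≤ ‖G‖ := by
  set N₁ := Matrix.diagonal (fun i => K + d₁ i - c) with hN₁def
  set N₂ := Matrix.diagonal (fun i => K - d₂ i + c) with hN₂def
  have hkey : (2*K) • R = N₂ * R + R * N₁ + G := by
    ext i j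
    have hG : (Matrix.diagonal d₂ * R - R * Matrix.diagonal d₁) i j = G i j := by rw [heq]
    simp only [Matrix.sub_apply, Matrix.mul_diagonal, Matrix.diagonal_mul] at hG
    simp only [Matrix.smul_apply, Matrix.add_apply, Matrix.mul_diagonal, Matrix.diagonal_mul,
      hN₁def, hN₂def, smul_eq_mul, ← hG]
    ring
  have hN₁ : ‖N₁‖ ≤ K - γ/2 :=
    norm_diagonal_le (by linarith)
      (fun i => abs_le.mpr ⟨by linarith [(h1 i).1], by linarith [(h1 i).2]⟩)
  have hN₂ : ‖N₂‖ ≤ K - γ/2 :=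
    norm_diagonal_le (by linarith)
      (fun i => abs_le.mpr ⟨by linarith [(h2 i).2], by linarith [(h2 i).1]⟩)
  have hRnn : 0 ≤ ‖R‖ := norm_nonneg _
  have h5 : (2*K) * ‖R‖ = ‖(2*K) • R‖ := by
    rw [norm_smul, Real.norm_eq_abs, abs_of_nonneg (by linarith)]
  have h6 : ‖N₂ * R + R * N₁ + G‖ ≤ (K - γ/2) * ‖R‖ + ‖R‖ * (K - γ/2) + ‖G‖ := by
    calc ‖N₂ * R + R * N₁ + G‖ ≤ ‖N₂ * R + R * N₁‖ + ‖G‖ := norm_add_le _ _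
    _ ≤ ‖N₂ * R‖ + ‖R * N₁‖ + ‖G‖ := by linarith [norm_add_le (N₂ * R) (R * N₁)]
    _ ≤ (K - γ/2) * ‖R‖ + ‖R‖ * (K - γ/2) + ‖G‖ := by
        have a1 := Matrix.l2_opNorm_mul N₂ R
        have a2 := Matrix.l2_opNorm_mul R N₁
        have b1 : ‖N₂ * R‖ ≤ (K - γ/2) * ‖R‖ :=
          a1.trans (mul_le_mul_of_nonneg_right hN₂ hRnn)
        have b2 : ‖R * N₁‖ ≤ ‖R‖ * (K - γ/2) :=
          a2.trans (mul_le_mul_of_nonneg_left hN₁ hRnn)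
        linarith
  rw [hkey] at h5
  nlinarith [h5, h6]

end core

section ortho
variable {n : ℕ} {ι : Type*} [Fintype ι] [DecidableEq ι]

lemma sum_dot (f : ι → Fin n → ℝ) (v : Fin n → ℝ) :
    (∑ a, f a) ⬝ᵥ v = ∑ a, f a ⬝ᵥ v := by
  simp only [dotProduct, Finset.sum_apply, Finset.sum_mul]
  rw [Finset.sum_comm]

lemma dot_sum (f : ι → Fin n → ℝ) (v : Fin n → ℝ) :
    v ⬝ᵥ (∑ a, f a) = ∑ a, v ⬝ᵥ f a := by
  simp only [dotProduct, Finset.sum_apply, Finset.mul_sum]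
  rw [Finset.sum_comm]

lemma mulVec_sum (M : Matrix (Fin n) (Fin n) ℝ) (f : ι → Fin n → ℝ) :
    M *ᵥ (∑ a, f a) = ∑ a, M *ᵥ f a :=
  map_sum (Matrix.mulVecLin M) f Finset.univ

lemma dot_sum_sum (y : ι → Fin n → ℝ)
    (hy : ∀ a b, y a ⬝ᵥ y b = if a = b then 1 else 0) (c d : ι → ℝ) :
    (∑ a, c a • y a) ⬝ᵥ (∑ b, d b • y b) = ∑ a, c a * d a := by
  rw [sum_dot]
  have : ∀ a, (c a • y a) ⬝ᵥ (∑ b, d b • y b) = c a * d a := by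
    intro a
    rw [dot_sum]
    have : ∀ b, (c a • y a) ⬝ᵥ (d b • y b) = (c a * d b) * (if a = b then 1 else 0) := by
      intro b
      rw [smul_dotProduct, dotProduct_smul, hy, smul_eq_mul, smul_eq_mul]
      ring
    simp only [this, mul_ite, mul_one, mul_zero, Finset.sum_ite_eq, Finset.mem_univ, if_true]
  simp only [this]

lemma li_of_ortho (y : ι → Fin n → ℝ)
    (hy : ∀ a b, y a ⬝ᵥ y b = if a = b then 1 else 0) : LinearIndependent ℝ y := by
  rw [Fintype.linearIndependent_iff]
  intro g hg k
  have h := congrArg (fun z => y k ⬝ᵥ z) hg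
  simp only [dot_sum, dotProduct_smul, hy, smul_eq_mul, mul_ite, mul_one, mul_zero,
    Finset.sum_ite_eq, Finset.mem_univ, if_true, dotProduct_zero] at h
  exact h

end ortho

section weyl
set_option linter.unusedSectionVars false

lemma weyl {n : ℕ} (B E' : Matrix (Fin n) (Fin n) ℝ)
    (lam tlam : ℕ → ℝ) (u tu : ℕ → (Fin n → ℝ))
    (hlam_mono : ∀ i ∈ Finset.Icc 1 n, ∀ j ∈ Finset.Icc 1 n, i ≤ j → lam j ≤ lam i)
    (htlam_mono : ∀ i ∈ Finset.Icc 1 n, ∀ j ∈ Finset.Icc 1 n, i ≤ j → tlam j ≤ tlam i)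
    (hu_on : ∀ i ∈ Finset.Icc 1 n, ∀ j ∈ Finset.Icc 1 n,
      u i ⬝ᵥ u j = if i = j then 1 else 0)
    (htu_on : ∀ i ∈ Finset.Icc 1 n, ∀ j ∈ Finset.Icc 1 n,
      tu i ⬝ᵥ tu j = if i = j then 1 else 0)
    (hu_eig : ∀ i ∈ Finset.Icc 1 n, B *ᵥ u i = lam i • u i)
    (htu_eig : ∀ i ∈ Finset.Icc 1 n, (B + E') *ᵥ tu i = tlam i • tu i)
    (q : ℕ) (hq : q ∈ Finset.Icc 1 n) :
    lam q - ‖E'‖ ≤ tlam q := by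
  obtain ⟨hq1, hqn⟩ := Finset.mem_Icc.mp hq
  set v : Fin q → Fin n → ℝ := fun k => u ((k : ℕ) + 1) with hv
  set w : Fin (n - q + 1) → Fin n → ℝ := fun k => tu (q + (k : ℕ)) with hw
  have hvmem : ∀ k : Fin q, (k : ℕ) + 1 ∈ Finset.Icc 1 n := by
    intro k; rw [Finset.mem_Icc]; omega
  have hwmem : ∀ k : Fin (n - q + 1), q + (k : ℕ) ∈ Finset.Icc 1 n := by
    intro k; rw [Finset.mem_Icc]; have := k.isLt; omega
  have hv_on : ∀ a b : Fin q, v a ⬝ᵥ v b = if a = b then 1 else 0 := by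
    intro a b
    rw [hv]
    simp only
    rw [hu_on _ (hvmem a) _ (hvmem b)]
    congr 1
    simp only [eq_iff_iff]
    constructor
    · intro h; exact Fin.ext (by omega)
    · intro h; rw [h]
  have hw_on : ∀ a b : Fin (n - q + 1), w a ⬝ᵥ w b = if a = b then 1 else 0 := by
    intro a b
    rw [hw]
    simp only
    rw [htu_on _ (hwmem a) _ (hwmem b)]
    congr 1
    simp only [eq_iff_iff]
    constructor
    · intro h; exact Fin.ext (by omega)
    · intro h; rw [h]
  set S := Submodule.span ℝ (Set.range v) with hS
  set T := Submodule.span ℝ (Set.range w) with hT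
  have hdimS : Module.finrank ℝ S = q := by
    rw [hS, finrank_span_eq_card (li_of_ortho v hv_on), Fintype.card_fin]
  have hdimT : Module.finrank ℝ T = n - q + 1 := by
    rw [hT, finrank_span_eq_card (li_of_ortho w hw_on), Fintype.card_fin]
  have hinf : 0 < Module.finrank ℝ (S ⊓ T : Submodule ℝ (Fin n → ℝ)) := by
    have h1 := Submodule.finrank_sup_add_finrank_inf_eq S T
    have h2 : Module.finrank ℝ (S ⊔ T : Submodule ℝ (Fin n → ℝ)) ≤ n := by
      have := Submodule.finrank_le (S ⊔ T : Submodule ℝ (Fin n → ℝ))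
      rwa [Module.finrank_fin_fun] at this
    omega
  obtain ⟨x, hxmem, hxne⟩ := Submodule.exists_mem_ne_zero_of_ne_bot
    (p := (S ⊓ T : Submodule ℝ (Fin n → ℝ))) (by
      intro hbot
      rw [hbot, finrank_bot] at hinf
      exact lt_irrefl 0 hinf)
  obtain ⟨hxS, hxT⟩ := Submodule.mem_inf.mp hxmem
  obtain ⟨cc, hcc⟩ := (Submodule.mem_span_range_iff_exists_fun ℝ).mp hxS
  obtain ⟨dd, hdd⟩ := (Submodule.mem_span_range_iff_exists_fun ℝ).mp hxT
  have hxx : x ⬝ᵥ x = ∑ k, cc k * cc k := by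
    rw [← hcc]; exact dot_sum_sum v hv_on cc cc
  have hxx' : x ⬝ᵥ x = ∑ k, dd k * dd k := by
    rw [← hdd]; exact dot_sum_sum w hw_on dd dd
  have hxxpos : 0 < x ⬝ᵥ x := by
    have h0 : 0 ≤ x ⬝ᵥ x := Finset.sum_nonneg (fun i _ => mul_self_nonneg (x i))
    rcases lt_or_eq_of_le h0 with h | h
    · exact h
    · exact absurd (dotProduct_self_eq_zero.mp h.symm) hxne
  have hBx : x ⬝ᵥ (B *ᵥ x) = ∑ k, cc k * (cc k * lam ((k : ℕ) + 1)) := by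
    have h1 : B *ᵥ x = ∑ k, (cc k * lam ((k : ℕ) + 1)) • v k := by
      rw [← hcc, _root_.mulVec_sum]
      congr 1
      funext k
      rw [Matrix.mulVec_smul, hu_eig _ (hvmem k), smul_smul]
    rw [h1, ← hcc]
    exact dot_sum_sum v hv_on cc (fun k => cc k * lam ((k : ℕ) + 1))
  have hBEx : x ⬝ᵥ ((B + E') *ᵥ x) = ∑ k, dd k * (dd k * tlam (q + (k : ℕ))) := by
    have h1 : (B + E') *ᵥ x = ∑ k, (dd k * tlam (q + (k : ℕ))) • w k := by
      rw [← hdd, _root_.mulVec_sum]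
      congr 1
      funext k
      rw [Matrix.mulVec_smul, htu_eig _ (hwmem k), smul_smul]
    rw [h1, ← hdd]
    exact dot_sum_sum w hw_on dd (fun k => dd k * tlam (q + (k : ℕ)))
  have hlow : lam q * (x ⬝ᵥ x) ≤ x ⬝ᵥ (B *ᵥ x) := by
    rw [hBx, hxx, Finset.mul_sum]
    apply Finset.sum_le_sum
    intro k _
    have hmono := hlam_mono _ (hvmem k) _ hq (by omega)
    have : lam q * (cc k * cc k) ≤ lam ((k:ℕ)+1) * (cc k * cc k) :=
      mul_le_mul_of_nonneg_right hmono (mul_self_nonneg _)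
    linarith [this]
  have hhigh : x ⬝ᵥ ((B + E') *ᵥ x) ≤ tlam q * (x ⬝ᵥ x) := by
    rw [hBEx, hxx', Finset.mul_sum]
    apply Finset.sum_le_sum
    intro k _
    have hmono := htlam_mono _ hq _ (hwmem k) (by omega)
    have : tlam (q+(k:ℕ)) * (dd k * dd k) ≤ tlam q * (dd k * dd k) :=
      mul_le_mul_of_nonneg_right hmono (mul_self_nonneg _)
    linarith [this]
  have hEbound : -(‖E'‖ * (x ⬝ᵥ x)) ≤ x ⬝ᵥ (E' *ᵥ x) := by
    have := dot_mulVec_abs_le E' x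
    have := abs_le.mp this
    linarith [this.1]
  have hsplit : x ⬝ᵥ ((B + E') *ᵥ x) = x ⬝ᵥ (B *ᵥ x) + x ⬝ᵥ (E' *ᵥ x) := by
    rw [Matrix.add_mulVec, dotProduct_add]
  have : (lam q - ‖E'‖) * (x ⬝ᵥ x) ≤ tlam q * (x ⬝ᵥ x) := by
    rw [sub_mul]
    linarith
  exact le_of_mul_le_mul_right (by linarith [this]) hxxpos
end weyl

section rep
variable {n : ℕ}

noncomputable def Vmat (n : ℕ) (u : ℕ → Fin n → ℝ) : Matrix (Fin n) (Fin n) ℝ :=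
  Matrix.of fun i j => u ((i : ℕ) + 1) j

noncomputable def chi (n p : ℕ) : Fin n → ℝ := fun i => if (i : ℕ) + 1 ≤ p then 1 else 0

lemma Vmat_mul_transpose (u : ℕ → Fin n → ℝ)
    (hu_on : ∀ i ∈ Finset.Icc 1 n, ∀ j ∈ Finset.Icc 1 n,
      u i ⬝ᵥ u j = if i = j then 1 else 0) :
    Vmat n u * (Vmat n u)ᵀ = 1 := by
  ext i j
  have hmem : ∀ k : Fin n, (k : ℕ) + 1 ∈ Finset.Icc 1 n := by
    intro k; rw [Finset.mem_Icc]; omega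
  have : (Vmat n u * (Vmat n u)ᵀ) i j = u ((i:ℕ)+1) ⬝ᵥ u ((j:ℕ)+1) := by
    simp [Matrix.mul_apply, Vmat, dotProduct, Matrix.transpose_apply]
  rw [this, hu_on _ (hmem i) _ (hmem j), Matrix.one_apply]
  congr 1
  simp only [eq_iff_iff]
  constructor
  · intro h; exact Fin.ext (by omega)
  · intro h; rw [h]

lemma sum_fin_icc {p : ℕ} (hpn : p ≤ n) (g : ℕ → ℝ) :
    ∑ k : Fin n, (if (k : ℕ) + 1 ≤ p then g ((k : ℕ) + 1) else 0)
      = ∑ i ∈ Finset.Icc 1 p, g i := by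
  rw [Fin.sum_univ_eq_sum_range (fun k => if k + 1 ≤ p then g (k + 1) else 0) n]
  rw [← Finset.sum_filter]
  have hfilter : (Finset.range n).filter (fun k => k + 1 ≤ p) = Finset.range p := by
    ext k
    simp only [Finset.mem_filter, Finset.mem_range]
    omega
  rw [hfilter, ← Finset.Ico_add_one_right_eq_Icc, Finset.sum_Ico_eq_sum_range]
  exact Finset.sum_congr (by norm_num) (fun k _ => by rw [Nat.add_comm 1 k])

lemma rep_proj {p : ℕ} (hpn : p ≤ n) (u : ℕ → Fin n → ℝ) :
    (∑ i ∈ Finset.Icc 1 p, vecMulVec (u i) (u i))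
      = (Vmat n u)ᵀ * Matrix.diagonal (chi n p) * (Vmat n u) := by
  ext a b
  rw [Matrix.mul_assoc]
  have h1 : ((Vmat n u)ᵀ * (Matrix.diagonal (chi n p) * (Vmat n u))) a b
      = ∑ k : Fin n, (if (k : ℕ) + 1 ≤ p then u ((k:ℕ)+1) a * u ((k:ℕ)+1) b else 0) := by
    simp only [Matrix.mul_apply, Matrix.diagonal_mul, Matrix.transpose_apply, Vmat, chi,
      Matrix.of_apply]
    refine Finset.sum_congr rfl (fun k _ => ?_)
    by_cases hk : (k : ℕ) + 1 ≤ p <;>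
      simp [hk, Matrix.diagonal_apply, chi, Finset.sum_ite_eq, ite_mul, zero_mul]
  rw [h1, sum_fin_icc hpn (fun i => u i a * u i b)]
  simp [Matrix.sum_apply, vecMulVec_apply]

end rep

section roweig
variable {n : ℕ}

lemma row_eig {B : Matrix (Fin n) (Fin n) ℝ} (hB : B.IsSymm) {lam : ℕ → ℝ} {u : ℕ → Fin n → ℝ}
    (h : ∀ i ∈ Finset.Icc 1 n, B *ᵥ u i = lam i • u i) :
    Vmat n u * B = Matrix.diagonal (fun i : Fin n => lam ((i : ℕ) + 1)) * Vmat n u := by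
  ext i j
  have hmem : (i : ℕ) + 1 ∈ Finset.Icc 1 n := by rw [Finset.mem_Icc]; omega
  have h2 := congrFun (h _ hmem) j
  simp only [Matrix.mulVec, dotProduct, Pi.smul_apply, smul_eq_mul] at h2
  simp only [Matrix.mul_apply, Vmat, Matrix.of_apply]
  have h3 : ∑ x : Fin n, Matrix.diagonal (fun i : Fin n => lam ((i : ℕ) + 1)) i x * u ((x:ℕ) + 1) j
      = lam ((i:ℕ)+1) * u ((i:ℕ)+1) j := by
    simp [Matrix.diagonal_apply, ite_mul, zero_mul, Finset.sum_ite_eq]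
  rw [h3, ← h2]
  refine Finset.sum_congr rfl (fun k _ => ?_)
  rw [← hB.apply j k]
  exact mul_comm _ _

lemma norm_sandwich {A B C : Matrix (Fin n) (Fin n) ℝ} (hA : ‖A‖ ≤ 1) (hC : ‖C‖ ≤ 1) :
    ‖A * B * C‖ ≤ ‖B‖ := by
  have h1 : ‖A * B * C‖ ≤ ‖A * B‖ * ‖C‖ := Matrix.l2_opNorm_mul _ _
  have h2 : ‖A * B‖ ≤ ‖A‖ * ‖B‖ := Matrix.l2_opNorm_mul _ _
  have hBnn : (0:ℝ) ≤ ‖B‖ := norm_nonneg _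
  have hABnn : (0:ℝ) ≤ ‖A * B‖ := norm_nonneg _
  calc ‖A * B * C‖ ≤ ‖A * B‖ * ‖C‖ := h1
  _ ≤ ‖A * B‖ * 1 := mul_le_mul_of_nonneg_left hC hABnn
  _ = ‖A * B‖ := mul_one _
  _ ≤ ‖A‖ * ‖B‖ := h2
  _ ≤ 1 * ‖B‖ := mul_le_mul_of_nonneg_right hA hBnn
  _ = ‖B‖ := one_mul _

end roweig

set_option maxHeartbeats 1000000 in
lemma dot_mulVec_self {n : ℕ} (M : Matrix (Fin n) (Fin n) ℝ) (x : Fin n → ℝ) :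
    (M *ᵥ x) ⬝ᵥ (M *ᵥ x) = x ⬝ᵥ ((Mᵀ * M) *ᵥ x) := by
  rw [← Matrix.mulVec_mulVec, Matrix.dotProduct_mulVec x, ← Matrix.mulVec_transpose]
  exact (dotProduct_comm _ _).symm


set_option maxHeartbeats 2000000 in
/-- **Davis–Kahan for the leading `p`-eigenspace.**  If `δ_p := λ_p − λ_{p+1} > 0`,
then `‖Π̃_p − Π_p‖ ≤ π‖E‖/δ_p`. (Indices are 1-based.) -/
theorem davis_kahan_leading
    {n : ℕ} (A E : Matrix (Fin n) (Fin n) ℝ) (hA : A.IsSymm) (hE : E.IsSymm)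
    (lam tlam : ℕ → ℝ) (u tu : ℕ → (Fin n → ℝ))
    (hlam_mono : ∀ i ∈ Finset.Icc 1 n, ∀ j ∈ Finset.Icc 1 n, i ≤ j → lam j ≤ lam i)
    (htlam_mono : ∀ i ∈ Finset.Icc 1 n, ∀ j ∈ Finset.Icc 1 n, i ≤ j → tlam j ≤ tlam i)
    (hu_on : ∀ i ∈ Finset.Icc 1 n, ∀ j ∈ Finset.Icc 1 n,
      u i ⬝ᵥ u j = if i = j then 1 else 0)
    (htu_on : ∀ i ∈ Finset.Icc 1 n, ∀ j ∈ Finset.Icc 1 n,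
      tu i ⬝ᵥ tu j = if i = j then 1 else 0)
    (hu_eig : ∀ i ∈ Finset.Icc 1 n, A *ᵥ u i = lam i • u i)
    (htu_eig : ∀ i ∈ Finset.Icc 1 n, (A + E) *ᵥ tu i = tlam i • tu i)
    (p : ℕ) (hp1 : 1 ≤ p) (hpn : p < n)
    (δp : ℝ) (hδp : δp = lam p - lam (p + 1)) (hδp_pos : 0 < δp) :
    specNorm ((∑ i ∈ Finset.Icc 1 p, vecMulVec (tu i) (tu i))
        - ∑ i ∈ Finset.Icc 1 p, vecMulVec (u i) (u i))
      ≤ Real.pi * specNorm E / δp := by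
  have hπ3 : (3:ℝ) < Real.pi := Real.pi_gt_three
  simp only [specNorm_eq]
  have hεnn : (0:ℝ) ≤ ‖E‖ := norm_nonneg _
  have hpn' : p ≤ n := hpn.le
  set Q := ∑ i ∈ Finset.Icc 1 p, vecMulVec (tu i) (tu i) with hQdef
  set P := ∑ i ∈ Finset.Icc 1 p, vecMulVec (u i) (u i) with hPdef
  set V := Vmat n u with hVdef
  set tV := Vmat n tu with htVdef
  set Dχ := Matrix.diagonal (chi n p) with hDχdef
  have hP : P = Vᵀ * Dχ * V := rep_proj hpn' u
  have hQ : Q = tVᵀ * Dχ * tV := rep_proj hpn' tu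
  have hVVt : V * Vᵀ = 1 := Vmat_mul_transpose u hu_on
  have htVtVt : tV * tVᵀ = 1 := Vmat_mul_transpose tu htu_on
  have hVtV : Vᵀ * V = 1 := mul_eq_one_comm.mp hVVt
  have htVttV : tVᵀ * tV = 1 := mul_eq_one_comm.mp htVtVt
  have hχχ : Dχ * Dχ = Dχ := by
    have hfun : (fun i => chi n p i * chi n p i) = chi n p := by
      funext i
      by_cases h : (i : ℕ) + 1 ≤ p <;> simp [chi, h]
    rw [hDχdef, Matrix.diagonal_mul_diagonal, hfun]
  have hχt : Dχᵀ = Dχ := by rw [hDχdef, Matrix.diagonal_transpose]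
  by_cases hcase : Real.pi * ‖E‖ < δp
  · -- nontrivial case
    have hεδ : ‖E‖ < δp := by nlinarith
    have hw1 : lam p - ‖E‖ ≤ tlam p :=
      weyl A E lam tlam u tu hlam_mono htlam_mono hu_on htu_on hu_eig htu_eig p
        (by rw [Finset.mem_Icc]; omega)
    have hAeq : ∀ i ∈ Finset.Icc 1 n, ((A + E) + (-E)) *ᵥ u i = lam i • u i := by
      intro i hi
      have h := hu_eig i hi
      have : (A + E) + (-E) = A := by abel
      rwa [this]
    have hw2' : tlam (p+1) - ‖-E‖ ≤ lam (p+1) :=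
      weyl (A + E) (-E) tlam lam tu u htlam_mono hlam_mono htu_on hu_on htu_eig hAeq (p+1)
        (by rw [Finset.mem_Icc]; omega)
    have hw2 : tlam (p+1) - ‖E‖ ≤ lam (p+1) := by rwa [norm_neg] at hw2'
    set γ₁ := tlam p - lam (p+1) with hγ₁def
    set γ₂ := lam p - tlam (p+1) with hγ₂def
    have hγ₁lb : δp - ‖E‖ ≤ γ₁ := by rw [hγ₁def, hδp]; linarith
    have hγ₂lb : δp - ‖E‖ ≤ γ₂ := by rw [hγ₂def, hδp]; linarith
    have hδε : 0 < δp - ‖E‖ := by linarith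
    have hγ₁pos : 0 < γ₁ := by linarith
    have hγ₂pos : 0 < γ₂ := by linarith
    -- eigen rows
    set D := Matrix.diagonal (fun i : Fin n => lam ((i : ℕ) + 1)) with hDdef
    set tD := Matrix.diagonal (fun i : Fin n => tlam ((i : ℕ) + 1)) with htDdef
    have hVA : V * A = D * V := row_eig hA hu_eig
    have hAEsymm : (A + E).IsSymm := hA.add hE
    have htVAE : tV * (A + E) = tD * tV := row_eig hAEsymm htu_eig
    set W := V * tVᵀ with hWdef
    set F := V * E * tVᵀ with hFdef
    have hsyl : W * tD - D * W = F := by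
      have h1 : tVᵀ * tD = (A + E) * tVᵀ := by
        have h := congrArg Matrix.transpose htVAE
        rw [Matrix.transpose_mul, Matrix.transpose_mul, htDdef, Matrix.diagonal_transpose,
          hAEsymm.eq] at h
        exact h.symm
      have h2 : W * tD = V * A * tVᵀ + V * E * tVᵀ := by
        calc W * tD = V * (tVᵀ * tD) := by rw [hWdef, Matrix.mul_assoc]
        _ = V * ((A + E) * tVᵀ) := by rw [h1]
        _ = V * (A * tVᵀ + E * tVᵀ) := by rw [Matrix.add_mul]
        _ = V * (A * tVᵀ) + V * (E * tVᵀ) := by rw [Matrix.mul_add]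
        _ = V * A * tVᵀ + V * E * tVᵀ := by rw [← Matrix.mul_assoc, ← Matrix.mul_assoc]
      rw [h2, hVA, hFdef, hWdef, ← Matrix.mul_assoc]
      abel
    have hsylab : ∀ a b : Fin n,
        W a b * tlam ((b:ℕ)+1) - lam ((a:ℕ)+1) * W a b = F a b := by
      intro a b
      have h : (W * tD - D * W) a b = F a b := by rw [hsyl]
      simpa [Matrix.sub_apply, htDdef, hDdef, Matrix.mul_diagonal, Matrix.diagonal_mul] using h
    set R := (1 - Dχ) * W * Dχ with hRdef
    set G := (1 - Dχ) * F * Dχ with hGdef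
    set R₂ := Dχ * W * (1 - Dχ) with hR₂def
    set G₂ := Dχ * F * (1 - Dχ) with hG₂def
    have h1mP : (1 : Matrix (Fin n) (Fin n) ℝ) - Dχ
        = Matrix.diagonal (fun i => 1 - chi n p i) := by
      rw [hDχdef, ← Matrix.diagonal_one, Matrix.diagonal_sub]
    have hRab : ∀ a b : Fin n, R a b = (1 - chi n p a) * W a b * chi n p b := by
      intro a b
      rw [hRdef, h1mP, hDχdef]
      simp [Matrix.mul_diagonal, Matrix.diagonal_mul]
    have hGab : ∀ a b : Fin n, G a b = (1 - chi n p a) * F a b * chi n p b := by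
      intro a b
      rw [hGdef, h1mP, hDχdef]
      simp [Matrix.mul_diagonal, Matrix.diagonal_mul]
    have hR₂ab : ∀ a b : Fin n, R₂ a b = chi n p a * W a b * (1 - chi n p b) := by
      intro a b
      rw [hR₂def, h1mP, hDχdef]
      simp [Matrix.mul_diagonal, Matrix.diagonal_mul]
    have hG₂ab : ∀ a b : Fin n, G₂ a b = chi n p a * F a b * (1 - chi n p b) := by
      intro a b
      rw [hG₂def, h1mP, hDχdef]
      simp [Matrix.mul_diagonal, Matrix.diagonal_mul]
    -- uniform bound β on eigenvalues
    have hne : (Finset.Icc 1 n).Nonempty := ⟨1, by rw [Finset.mem_Icc]; omega⟩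
    set β := (Finset.Icc 1 n).sup' hne (fun i => max |lam i| |tlam i|) with hβdef
    have hβ : ∀ i ∈ Finset.Icc 1 n, |lam i| ≤ β ∧ |tlam i| ≤ β := by
      intro i hi
      have hs : max |lam i| |tlam i| ≤ β := by
        rw [hβdef]
        exact Finset.le_sup' (fun i => max |lam i| |tlam i|) hi
      exact ⟨le_trans (le_max_left _ _) hs, le_trans (le_max_right _ _) hs⟩
    have hpmem : p ∈ Finset.Icc 1 n := by rw [Finset.mem_Icc]; omega
    have hp1mem : p + 1 ∈ Finset.Icc 1 n := by rw [Finset.mem_Icc]; omega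
    have hβp := hβ p hpmem
    have hβp1 := hβ (p+1) hp1mem
    have hmem1 : ∀ j : Fin n, (j:ℕ) + 1 ∈ Finset.Icc 1 n := by
      intro j; rw [Finset.mem_Icc]; omega
    -- first sin-theta block
    set c₁ := (tlam p + lam (p+1))/2 with hc₁def
    set K₁ := β + |c₁| with hK₁def
    have hc₁hi : c₁ + γ₁/2 = tlam p := by rw [hc₁def, hγ₁def]; ring
    have hc₁lo : c₁ - γ₁/2 = lam (p+1) := by rw [hc₁def, hγ₁def]; ring
    have hK₁γ : γ₁/2 ≤ K₁ := by
      have h1 := abs_le.mp hβp.2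
      have h2 := abs_le.mp hβp1.1
      rw [hK₁def, hγ₁def]
      have : (0:ℝ) ≤ |c₁| := abs_nonneg _
      linarith
    have hb₁ : ∀ i : Fin n,
        c₁ - K₁ ≤ (fun j : Fin n => if (j:ℕ)+1 ≤ p then c₁ - γ₁/2 else lam ((j:ℕ)+1)) i ∧
        (fun j : Fin n => if (j:ℕ)+1 ≤ p then c₁ - γ₁/2 else lam ((j:ℕ)+1)) i ≤ c₁ - γ₁/2 := by
      intro i
      by_cases h : (i:ℕ)+1 ≤ p
      · simp only [if_pos h]
        exact ⟨by linarith, le_refl _⟩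
      · simp only [if_neg h]
        have hmono := hlam_mono (p+1) hp1mem ((i:ℕ)+1) (hmem1 i) (by omega)
        have habs := abs_le.mp (hβ ((i:ℕ)+1) (hmem1 i)).1
        have hc₁abs := le_abs_self c₁
        constructor
        · rw [hK₁def]; linarith
        · rw [hc₁lo]; exact hmono
    have hb₂ : ∀ i : Fin n,
        c₁ + γ₁/2 ≤ (fun j : Fin n => if (j:ℕ)+1 ≤ p then tlam ((j:ℕ)+1) else c₁ + γ₁/2) i ∧
        (fun j : Fin n => if (j:ℕ)+1 ≤ p then tlam ((j:ℕ)+1) else c₁ + γ₁/2) i ≤ c₁ + K₁ := by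
      intro i
      by_cases h : (i:ℕ)+1 ≤ p
      · simp only [if_pos h]
        have hmono := htlam_mono ((i:ℕ)+1) (hmem1 i) p hpmem h
        have habs := abs_le.mp (hβ ((i:ℕ)+1) (hmem1 i)).2
        have hc₁abs := neg_abs_le c₁
        constructor
        · rw [hc₁hi]; exact hmono
        · rw [hK₁def]; linarith
      · simp only [if_neg h]
        exact ⟨le_refl _, by linarith⟩
    have hReq : R * Matrix.diagonal (fun j : Fin n => if (j:ℕ)+1 ≤ p then tlam ((j:ℕ)+1) else c₁ + γ₁/2)
        - Matrix.diagonal (fun j : Fin n => if (j:ℕ)+1 ≤ p then c₁ - γ₁/2 else lam ((j:ℕ)+1)) * R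
        = G := by
      ext a b
      simp only [Matrix.sub_apply, Matrix.mul_diagonal, Matrix.diagonal_mul]
      rw [hRab a b, hGab a b]
      by_cases ha : (a:ℕ)+1 ≤ p
      · simp [chi, ha]
      · by_cases hb : (b:ℕ)+1 ≤ p
        · simp only [chi, if_neg ha, if_pos hb]
          have h := hsylab a b
          ring_nf
          ring_nf at h
          linarith
        · simp [chi, ha, hb]
    have hcore₁ : γ₁ * ‖R‖ ≤ ‖G‖ := core_sylvester hγ₁pos hK₁γ hb₁ hb₂ hReq
    -- second sin-theta block
    set c₂ := (lam p + tlam (p+1))/2 with hc₂def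
    set K₂ := β + |c₂| with hK₂def
    have hc₂hi : c₂ + γ₂/2 = lam p := by rw [hc₂def, hγ₂def]; ring
    have hc₂lo : c₂ - γ₂/2 = tlam (p+1) := by rw [hc₂def, hγ₂def]; ring
    have hK₂γ : γ₂/2 ≤ K₂ := by
      have h1 := abs_le.mp hβp.1
      have h2 := abs_le.mp hβp1.2
      rw [hK₂def, hγ₂def]
      have : (0:ℝ) ≤ |c₂| := abs_nonneg _
      linarith
    have hb₁' : ∀ i : Fin n,
        c₂ - K₂ ≤ (fun j : Fin n => if (j:ℕ)+1 ≤ p then c₂ - γ₂/2 else tlam ((j:ℕ)+1)) i ∧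
        (fun j : Fin n => if (j:ℕ)+1 ≤ p then c₂ - γ₂/2 else tlam ((j:ℕ)+1)) i ≤ c₂ - γ₂/2 := by
      intro i
      by_cases h : (i:ℕ)+1 ≤ p
      · simp only [if_pos h]
        exact ⟨by linarith, le_refl _⟩
      · simp only [if_neg h]
        have hmono := htlam_mono (p+1) hp1mem ((i:ℕ)+1) (hmem1 i) (by omega)
        have habs := abs_le.mp (hβ ((i:ℕ)+1) (hmem1 i)).2
        have hc₂abs := le_abs_self c₂
        constructor
        · rw [hK₂def]; linarith
        · rw [hc₂lo]; exact hmono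
    have hb₂' : ∀ i : Fin n,
        c₂ + γ₂/2 ≤ (fun j : Fin n => if (j:ℕ)+1 ≤ p then lam ((j:ℕ)+1) else c₂ + γ₂/2) i ∧
        (fun j : Fin n => if (j:ℕ)+1 ≤ p then lam ((j:ℕ)+1) else c₂ + γ₂/2) i ≤ c₂ + K₂ := by
      intro i
      by_cases h : (i:ℕ)+1 ≤ p
      · simp only [if_pos h]
        have hmono := hlam_mono ((i:ℕ)+1) (hmem1 i) p hpmem h
        have habs := abs_le.mp (hβ ((i:ℕ)+1) (hmem1 i)).1
        have hc₂abs := neg_abs_le c₂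
        constructor
        · rw [hc₂hi]; exact hmono
        · rw [hK₂def]; linarith
      · simp only [if_neg h]
        exact ⟨le_refl _, by linarith⟩
    have hR₂eq : Matrix.diagonal (fun j : Fin n => if (j:ℕ)+1 ≤ p then lam ((j:ℕ)+1) else c₂ + γ₂/2) * R₂
        - R₂ * Matrix.diagonal (fun j : Fin n => if (j:ℕ)+1 ≤ p then c₂ - γ₂/2 else tlam ((j:ℕ)+1))
        = -G₂ := by
      ext a b
      simp only [Matrix.sub_apply, Matrix.neg_apply, Matrix.mul_diagonal, Matrix.diagonal_mul]
      rw [hR₂ab a b, hG₂ab a b]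
      by_cases ha : (a:ℕ)+1 ≤ p
      · by_cases hb : (b:ℕ)+1 ≤ p
        · simp [chi, ha, hb]
        · simp only [chi, if_pos ha, if_neg hb]
          have h := hsylab a b
          ring_nf
          ring_nf at h
          linarith
      · simp [chi, ha]
    have hcore₂ : γ₂ * ‖R₂‖ ≤ ‖G₂‖ := by
      have h := core_sylvester' hγ₂pos hK₂γ hb₁' hb₂' hR₂eq
      rwa [norm_neg] at h
    -- norm bounds on G, G₂
    have hV1 : ‖V‖ ≤ 1 := norm_le_one_of_orth hVtV
    have hVt1 : ‖Vᵀ‖ ≤ 1 := norm_le_one_of_orth (by rw [Matrix.transpose_transpose]; exact hVVt)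
    have htV1 : ‖tV‖ ≤ 1 := norm_le_one_of_orth htVttV
    have htVt1 : ‖tVᵀ‖ ≤ 1 :=
      norm_le_one_of_orth (by rw [Matrix.transpose_transpose]; exact htVtVt)
    have hDχ1 : ‖Dχ‖ ≤ 1 := by
      rw [hDχdef]
      apply norm_diagonal_le zero_le_one
      intro i
      by_cases h : (i:ℕ)+1 ≤ p <;> simp [chi, h]
    have h1mP1 : ‖(1 : Matrix (Fin n) (Fin n) ℝ) - Dχ‖ ≤ 1 := by
      rw [h1mP]
      apply norm_diagonal_le zero_le_one
      intro i
      by_cases h : (i:ℕ)+1 ≤ p <;> simp [chi, h]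
    have hF1 : ‖F‖ ≤ ‖E‖ := by rw [hFdef]; exact norm_sandwich hV1 htVt1
    have hGle : ‖G‖ ≤ ‖E‖ := by
      rw [hGdef]
      exact le_trans (norm_sandwich h1mP1 hDχ1) hF1
    have hG₂le : ‖G₂‖ ≤ ‖E‖ := by
      rw [hG₂def]
      exact le_trans (norm_sandwich hDχ1 h1mP1) hF1
    have hRle : ‖R‖ ≤ ‖E‖ / (δp - ‖E‖) := by
      rw [le_div_iff₀ hδε]
      have h1 : (δp - ‖E‖) * ‖R‖ ≤ γ₁ * ‖R‖ :=
        mul_le_mul_of_nonneg_right hγ₁lb (norm_nonneg _)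
      calc ‖R‖ * (δp - ‖E‖) = (δp - ‖E‖) * ‖R‖ := mul_comm _ _
      _ ≤ γ₁ * ‖R‖ := h1
      _ ≤ ‖G‖ := hcore₁
      _ ≤ ‖E‖ := hGle
    have hR₂le : ‖R₂‖ ≤ ‖E‖ / (δp - ‖E‖) := by
      rw [le_div_iff₀ hδε]
      have h1 : (δp - ‖E‖) * ‖R₂‖ ≤ γ₂ * ‖R₂‖ :=
        mul_le_mul_of_nonneg_right hγ₂lb (norm_nonneg _)
      calc ‖R₂‖ * (δp - ‖E‖) = (δp - ‖E‖) * ‖R₂‖ := mul_comm _ _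
      _ ≤ γ₂ * ‖R₂‖ := h1
      _ ≤ ‖G₂‖ := hcore₂
      _ ≤ ‖E‖ := hG₂le
    -- assembling Q - P
    have e1 : Vᵀ * R * tV = Vᵀ * (V * (tVᵀ * (Dχ * tV)))
        - Vᵀ * (Dχ * (V * (tVᵀ * (Dχ * tV)))) := by
      rw [hRdef, hWdef]
      noncomm_ring
    have e1' : Vᵀ * R * tV = tVᵀ * (Dχ * tV) - Vᵀ * (Dχ * (V * (tVᵀ * (Dχ * tV)))) := by
      rw [e1, ← Matrix.mul_assoc Vᵀ V _, hVtV, Matrix.one_mul]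
    have e2 : Vᵀ * R₂ * tV = Vᵀ * (Dχ * (V * (tVᵀ * tV)))
        - Vᵀ * (Dχ * (V * (tVᵀ * (Dχ * tV)))) := by
      rw [hR₂def, hWdef]
      noncomm_ring
    have e2' : Vᵀ * R₂ * tV = Vᵀ * (Dχ * V)
        - Vᵀ * (Dχ * (V * (tVᵀ * (Dχ * tV)))) := by
      rw [e2, htVttV, Matrix.mul_one]
    have hQP : Q - P = Vᵀ * R * tV - Vᵀ * R₂ * tV := by
      rw [hQ, hP, e1', e2']
      simp only [Matrix.mul_assoc]
      abel
    have hfinal : ‖Q - P‖ ≤ ‖E‖ / (δp - ‖E‖) + ‖E‖ / (δp - ‖E‖) := by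
      rw [hQP]
      calc ‖Vᵀ * R * tV - Vᵀ * R₂ * tV‖ ≤ ‖Vᵀ * R * tV‖ + ‖Vᵀ * R₂ * tV‖ := norm_sub_le _ _
      _ ≤ ‖R‖ + ‖R₂‖ := add_le_add (norm_sandwich hVt1 htV1) (norm_sandwich hVt1 htV1)
      _ ≤ ‖E‖ / (δp - ‖E‖) + ‖E‖ / (δp - ‖E‖) := add_le_add hRle hR₂le
    have harith : ‖E‖ / (δp - ‖E‖) + ‖E‖ / (δp - ‖E‖) ≤ Real.pi * ‖E‖ / δp := by
      rw [← add_div, div_le_div_iff₀ hδε hδp_pos]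
      have hkey : Real.pi * ‖E‖ * ‖E‖ ≤ δp * ‖E‖ :=
        mul_le_mul_of_nonneg_right hcase.le hεnn
      nlinarith [mul_nonneg hεnn hδp_pos.le]
    linarith
  · -- trivial case : δp ≤ π ‖E‖, use ‖Q - P‖ ≤ 1
    push_neg at hcase
    have hPP : P * P = P := by
      rw [hP]
      have h1 : (Vᵀ * Dχ * V) * (Vᵀ * Dχ * V) = Vᵀ * Dχ * (V * Vᵀ) * Dχ * V := by
        simp only [Matrix.mul_assoc]
      rw [h1, hVVt, Matrix.mul_one]
      have h2 : Vᵀ * Dχ * Dχ * V = Vᵀ * (Dχ * Dχ) * V := by simp only [Matrix.mul_assoc]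
      rw [h2, hχχ]
    have hQQ : Q * Q = Q := by
      rw [hQ]
      have h1 : (tVᵀ * Dχ * tV) * (tVᵀ * Dχ * tV) = tVᵀ * Dχ * (tV * tVᵀ) * Dχ * tV := by
        simp only [Matrix.mul_assoc]
      rw [h1, htVtVt, Matrix.mul_one]
      have h2 : tVᵀ * Dχ * Dχ * tV = tVᵀ * (Dχ * Dχ) * tV := by simp only [Matrix.mul_assoc]
      rw [h2, hχχ]
    have hPsym : Pᵀ = P := by
      rw [hP]
      simp only [Matrix.transpose_mul, Matrix.transpose_transpose, hχt, Matrix.mul_assoc]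
    have hQsym : Qᵀ = Q := by
      rw [hQ]
      simp only [Matrix.transpose_mul, Matrix.transpose_transpose, hχt, Matrix.mul_assoc]
    have key : (Q - P) * (Q - P) + (1 - P - Q) * (1 - P - Q) = 1 := by
      have expand1 : (Q - P) * (Q - P) = Q*Q - Q*P - P*Q + P*P := by noncomm_ring
      have expand2 : (1 - P - Q) * (1 - P - Q)
          = 1 - P - Q - P + P*P + P*Q - Q + Q*P + Q*Q := by noncomm_ring
      rw [expand1, expand2, hPP, hQQ]
      noncomm_ring
    have hQPsym : (Q - P)ᵀ = Q - P := by rw [Matrix.transpose_sub, hPsym, hQsym]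
    have hZsym : (1 - P - Q)ᵀ = 1 - P - Q := by
      rw [Matrix.transpose_sub, Matrix.transpose_sub, Matrix.transpose_one, hPsym, hQsym]
    have hnorm1 : ‖Q - P‖ ≤ 1 := by
      apply norm_le_of_sq zero_le_one
      intro x
      have hyy := dot_mulVec_self (Q - P) x
      rw [hQPsym] at hyy
      have hzz := dot_mulVec_self (1 - P - Q) x
      rw [hZsym] at hzz
      have hznn : 0 ≤ ((1 - P - Q) *ᵥ x) ⬝ᵥ ((1 - P - Q) *ᵥ x) :=
        Finset.sum_nonneg (fun i _ => mul_self_nonneg _)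
      have hsum : ((Q-P) *ᵥ x) ⬝ᵥ ((Q-P) *ᵥ x) + ((1-P-Q) *ᵥ x) ⬝ᵥ ((1-P-Q) *ᵥ x)
          = x ⬝ᵥ x := by
        rw [hyy, hzz, ← dotProduct_add, ← Matrix.add_mulVec, key, Matrix.one_mulVec]
      nlinarith [hsum, hznn]
    have hfin : (1:ℝ) ≤ Real.pi * ‖E‖ / δp := by
      rw [le_div_iff₀ hδp_pos]
      linarith
    linarith
end

section
/- Let 1 ≤ p < n and assume δ_p := λ_p − λ_{p+1} > 0. Then M₁ ≤ 8‖E‖/δ_p. -/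
open Matrix

/-- The resolvent `(zI − A)⁻¹` of a real matrix `A`, regarded as a complex matrix. -/
noncomputable def res {n : ℕ} (A : Matrix (Fin n) (Fin n) ℝ) (z : ℂ) :
    Matrix (Fin n) (Fin n) ℂ :=
  (z • (1 : Matrix (Fin n) (Fin n) ℂ) - A.map Complex.ofReal)⁻¹

section Aux

lemma specNorm_nonneg {𝕜 : Type*} [RCLike 𝕜] {m n : ℕ} (M : Matrix (Fin m) (Fin n) 𝕜) :
    0 ≤ specNorm M := norm_nonneg _

lemma le_specNorm {𝕜 : Type*} [RCLike 𝕜] {m n : ℕ} (M : Matrix (Fin m) (Fin n) 𝕜)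
    (v : Fin n → 𝕜) :
    ‖(WithLp.equiv 2 (Fin m → 𝕜)).symm (M *ᵥ v)‖ ≤
      specNorm M * ‖(WithLp.equiv 2 (Fin n → 𝕜)).symm v‖ := by
  have := (LinearMap.toContinuousLinearMap (Matrix.toEuclideanLin M)).le_opNorm
      ((WithLp.equiv 2 (Fin n → 𝕜)).symm v)
  simpa [specNorm, Matrix.toEuclideanLin_apply] using this

lemma specNorm_le_bound {𝕜 : Type*} [RCLike 𝕜] {m n : ℕ} (M : Matrix (Fin m) (Fin n) 𝕜)
    {c : ℝ} (hc : 0 ≤ c)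
    (h : ∀ v : Fin n → 𝕜, ‖(WithLp.equiv 2 (Fin m → 𝕜)).symm (M *ᵥ v)‖ ≤
      c * ‖(WithLp.equiv 2 (Fin n → 𝕜)).symm v‖) :
    specNorm M ≤ c := by
  apply ContinuousLinearMap.opNorm_le_bound _ hc
  intro x
  simpa [Matrix.toEuclideanLin_apply] using h ((WithLp.equiv 2 (Fin n → 𝕜)) x)

lemma specNorm_mul_le {𝕜 : Type*} [RCLike 𝕜] {n : ℕ} (M N : Matrix (Fin n) (Fin n) 𝕜) :
    specNorm (M * N) ≤ specNorm M * specNorm N := by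
  apply specNorm_le_bound _ (mul_nonneg (specNorm_nonneg M) (specNorm_nonneg N))
  intro v
  calc ‖(WithLp.equiv 2 (Fin n → 𝕜)).symm ((M * N) *ᵥ v)‖
      = ‖(WithLp.equiv 2 (Fin n → 𝕜)).symm (M *ᵥ (N *ᵥ v))‖ := by rw [Matrix.mulVec_mulVec]
    _ ≤ specNorm M * ‖(WithLp.equiv 2 (Fin n → 𝕜)).symm (N *ᵥ v)‖ := le_specNorm M _
    _ ≤ specNorm M * (specNorm N * ‖(WithLp.equiv 2 (Fin n → 𝕜)).symm v‖) := by
        exact mul_le_mul_of_nonneg_left (le_specNorm N v) (specNorm_nonneg M)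
    _ = _ := by ring

lemma euclid_norm_sq {𝕜 : Type*} [RCLike 𝕜] {m : ℕ} (v : Fin m → 𝕜) :
    ‖(WithLp.equiv 2 (Fin m → 𝕜)).symm v‖ ^ 2 = ∑ i, ‖v i‖ ^ 2 := by
  rw [EuclideanSpace.norm_eq]
  rw [Real.sq_sqrt (by positivity)]; simp [WithLp.equiv_symm_apply, PiLp.toLp_apply]

lemma specNorm_map_ofReal {n : ℕ} (E : Matrix (Fin n) (Fin n) ℝ) :
    specNorm (E.map Complex.ofReal) ≤ specNorm E := by
  apply specNorm_le_bound _ (specNorm_nonneg E)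
  intro v
  set a : Fin n → ℝ := fun i => (v i).re with ha
  set b : Fin n → ℝ := fun i => (v i).im with hb
  have hmv : ∀ i, ((E.map Complex.ofReal) *ᵥ v) i =
      Complex.mk ((E *ᵥ a) i) ((E *ᵥ b) i) := by
    intro i
    simp only [Matrix.mulVec, dotProduct, Matrix.map_apply]
    rw [Complex.ext_iff]
    constructor
    · simp [Complex.re_sum, a]
    · simp [Complex.im_sum, b]
  have key : ∀ (x : Fin n → ℝ), ‖(WithLp.equiv 2 (Fin n → ℝ)).symm (E *ᵥ x)‖ ^ 2 ≤
      specNorm E ^ 2 * ‖(WithLp.equiv 2 (Fin n → ℝ)).symm x‖ ^ 2 := by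
    intro x
    have h := le_specNorm E x
    have h0 : (0:ℝ) ≤ ‖(WithLp.equiv 2 (Fin n → ℝ)).symm (E *ᵥ x)‖ := norm_nonneg _
    nlinarith [norm_nonneg ((WithLp.equiv 2 (Fin n → ℝ)).symm x), specNorm_nonneg E]
  have hsq : ‖(WithLp.equiv 2 (Fin n → ℂ)).symm ((E.map Complex.ofReal) *ᵥ v)‖ ^ 2 ≤
      (specNorm E * ‖(WithLp.equiv 2 (Fin n → ℂ)).symm v‖) ^ 2 := by
    rw [euclid_norm_sq]
    have e1 : ∑ i, ‖((E.map Complex.ofReal) *ᵥ v) i‖ ^ 2 =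
        (∑ i, ((E *ᵥ a) i) ^ 2) + (∑ i, ((E *ᵥ b) i) ^ 2) := by
      rw [← Finset.sum_add_distrib]
      refine Finset.sum_congr rfl fun i _ => ?_
      rw [hmv i]
      rw [Complex.sq_norm, Complex.normSq_mk]
      ring
    have e2 : ‖(WithLp.equiv 2 (Fin n → ℂ)).symm v‖ ^ 2 =
        (∑ i, (a i) ^ 2) + (∑ i, (b i) ^ 2) := by
      rw [euclid_norm_sq]
      rw [← Finset.sum_add_distrib]
      refine Finset.sum_congr rfl fun i _ => ?_
      rw [Complex.sq_norm, Complex.normSq_apply]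
      ring
    have hka := key a
    have hkb := key b
    rw [euclid_norm_sq, euclid_norm_sq] at hka
    rw [euclid_norm_sq, euclid_norm_sq] at hkb
    simp only [Real.norm_eq_abs, sq_abs] at hka hkb
    rw [e1, mul_pow, e2]
    nlinarith
  have h1 : (0:ℝ) ≤ specNorm E * ‖(WithLp.equiv 2 (Fin n → ℂ)).symm v‖ :=
    mul_nonneg (specNorm_nonneg E) (norm_nonneg _)
  nlinarith [norm_nonneg ((WithLp.equiv 2 (Fin n → ℂ)).symm ((E.map Complex.ofReal) *ᵥ v))]

variable {n : ℕ} (A : Matrix (Fin n) (Fin n) ℝ) (lam : ℕ → ℝ) (u : ℕ → Fin n → ℝ)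

lemma map_ofReal_mulVec (x : Fin n → ℝ) :
    (A.map Complex.ofReal) *ᵥ (fun j => (x j : ℂ)) = fun i => ((A *ᵥ x) i : ℂ) := by
  funext i
  simp [Matrix.mulVec, dotProduct, Matrix.map_apply]

lemma resolvent_lower_bound
    (hu_on : ∀ i ∈ Finset.Icc 1 n, ∀ j ∈ Finset.Icc 1 n,
      u i ⬝ᵥ u j = if i = j then 1 else 0)
    (hu_eig : ∀ i ∈ Finset.Icc 1 n, A *ᵥ u i = lam i • u i)
    (hn : 0 < n)
    (z : ℂ) {c : ℝ} (hc : 0 < c)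
    (hz : ∀ i ∈ Finset.Icc 1 n, c ≤ ‖z - lam i‖) :
    ∀ v : Fin n → ℂ,
      c * ‖(WithLp.equiv 2 (Fin n → ℂ)).symm v‖ ≤
      ‖(WithLp.equiv 2 (Fin n → ℂ)).symm
        ((z • (1 : Matrix (Fin n) (Fin n) ℂ) - A.map Complex.ofReal) *ᵥ v)‖ := by
  classical
  set B : Matrix (Fin n) (Fin n) ℂ := z • 1 - A.map Complex.ofReal with hB
  have hmem : ∀ i : Fin n, (i : ℕ) + 1 ∈ Finset.Icc 1 n := by
    intro i; simp [Nat.succ_le_of_lt i.isLt]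
  set wv : Fin n → (Fin n → ℂ) := fun i => fun j => ((u ((i : ℕ) + 1) j : ℝ) : ℂ) with hwv
  set w : Fin n → EuclideanSpace ℂ (Fin n) := fun i => (WithLp.equiv 2 (Fin n → ℂ)).symm (wv i)
    with hw
  -- orthonormality
  have hon : Orthonormal ℂ w := by
    rw [orthonormal_iff_ite]
    intro i j
    have := hu_on _ (hmem i) _ (hmem j)
    simp only [PiLp.inner_apply, RCLike.inner_apply, hw, hwv]
    simp only [WithLp.equiv_symm_apply, PiLp.toLp_apply, Complex.conj_ofReal]
    rw [show (∑ x, ((u ((j:ℕ)+1) x : ℂ)) * (u ((i:ℕ)+1) x : ℂ))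
        = ((u ((i:ℕ)+1) ⬝ᵥ u ((j:ℕ)+1) : ℝ) : ℂ) by
      push_cast [dotProduct]; exact Finset.sum_congr rfl fun _ _ => mul_comm _ _]
    rw [this]
    by_cases h : i = j
    · simp [h]
    · have : ¬ ((i:ℕ) + 1 = (j:ℕ) + 1) := by
        simp [Fin.val_inj, h]
      simp [h, this, Fin.val_inj]
  -- eigen action of B on the w's
  have hBw : ∀ i : Fin n, B *ᵥ (wv i) = (z - lam ((i:ℕ)+1)) • (wv i) := by
    intro i
    have heig := hu_eig _ (hmem i)
    have h1 : (A.map Complex.ofReal) *ᵥ (wv i) = fun j => ((lam ((i:ℕ)+1) * u ((i:ℕ)+1) j : ℝ) : ℂ) := by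
      rw [hwv]
      rw [map_ofReal_mulVec A (u ((i:ℕ)+1))]
      funext j
      rw [heig]
      simp
    rw [hB, Matrix.sub_mulVec, h1]
    funext j
    simp [Matrix.smul_mulVec, Matrix.one_mulVec, wv, sub_smul, Pi.smul_apply, smul_eq_mul]
    ring
  -- w is a basis
  haveI : Nonempty (Fin n) := ⟨⟨0, hn⟩⟩
  have hcard : Fintype.card (Fin n) = Module.finrank ℂ (EuclideanSpace ℂ (Fin n)) := by
    simp
  let b : Module.Basis (Fin n) ℂ (EuclideanSpace ℂ (Fin n)) :=
    basisOfLinearIndependentOfCardEqFinrank hon.linearIndependent hcard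
  have hb : ∀ i, b i = w i := fun i =>
    congrFun (coe_basisOfLinearIndependentOfCardEqFinrank hon.linearIndependent hcard) i
  have norm_sum : ∀ d : Fin n → ℂ, ‖∑ i, d i • w i‖ ^ 2 = ∑ i, ‖d i‖ ^ 2 := by
    intro d
    have h1 := hon.inner_sum d d Finset.univ
    have h2 : RCLike.re (inner (𝕜 := ℂ) (∑ i, d i • w i) (∑ i, d i • w i))
        = ‖∑ i, d i • w i‖ ^ 2 := inner_self_eq_norm_sq _
    rw [← h2, h1, map_sum]
    refine Finset.sum_congr rfl fun i _ => ?_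
    rw [RCLike.conj_mul]
    simp [← Complex.ofReal_pow]
  intro v
  set x : EuclideanSpace ℂ (Fin n) := (WithLp.equiv 2 (Fin n → ℂ)).symm v with hx0
  set cf : Fin n → ℂ := fun i => b.repr x i with hcf
  have hxsum : x = ∑ i, cf i • w i := by
    conv_lhs => rw [← b.sum_repr x]
    exact Finset.sum_congr rfl fun i _ => by rw [hb]
  have hLx : (WithLp.equiv 2 (Fin n → ℂ)).symm (B *ᵥ v)
      = ∑ i, (cf i * (z - lam ((i:ℕ)+1))) • w i := by
    have : (WithLp.equiv 2 (Fin n → ℂ)).symm (B *ᵥ v) = Matrix.toEuclideanLin B x := by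
      rw [hx0, WithLp.equiv_symm_apply, Matrix.toEuclideanLin_apply_piLp_toLp]
    rw [this, hxsum, map_sum]
    refine Finset.sum_congr rfl fun i _ => ?_
    rw [LinearMap.map_smul]
    have : Matrix.toEuclideanLin B (w i) = (z - lam ((i:ℕ)+1)) • w i := by
      rw [hw]
      simp only []
      rw [WithLp.equiv_symm_apply, Matrix.toEuclideanLin_apply_piLp_toLp, hBw i]
      rfl
    rw [this, smul_smul]
  have hnx : ‖x‖ ^ 2 = ∑ i, ‖cf i‖ ^ 2 := by rw [hxsum, norm_sum]
  have hnLx : ‖(WithLp.equiv 2 (Fin n → ℂ)).symm (B *ᵥ v)‖ ^ 2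
      = ∑ i, ‖cf i * (z - lam ((i:ℕ)+1))‖ ^ 2 := by rw [hLx, norm_sum]
  have hterm : ∀ i : Fin n, c ^ 2 * ‖cf i‖ ^ 2 ≤ ‖cf i * (z - lam ((i:ℕ)+1))‖ ^ 2 := by
    intro i
    rw [norm_mul, mul_pow]
    have h3 := hz _ (hmem i)
    have h4 : (0:ℝ) ≤ ‖cf i‖ ^ 2 := by positivity
    have h5 : ‖(z - (lam ((i:ℕ)+1) : ℂ))‖ = ‖z - lam ((i:ℕ)+1)‖ := rfl
    rw [h5]
    calc c ^ 2 * ‖cf i‖ ^ 2 ≤ ‖z - lam ((i:ℕ)+1)‖ ^ 2 * ‖cf i‖ ^ 2 := by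
          apply mul_le_mul_of_nonneg_right _ h4
          exact pow_le_pow_left₀ hc.le h3 2
      _ = ‖cf i‖ ^ 2 * ‖z - lam ((i:ℕ)+1)‖ ^ 2 := by ring
  have hsq : (c * ‖x‖) ^ 2 ≤ ‖(WithLp.equiv 2 (Fin n → ℂ)).symm (B *ᵥ v)‖ ^ 2 := by
    rw [hnLx, mul_pow, hnx, Finset.mul_sum]
    exact Finset.sum_le_sum fun i _ => hterm i
  have h6 : (0:ℝ) ≤ c * ‖x‖ := mul_nonneg hc.le (norm_nonneg _)
  nlinarith [norm_nonneg ((WithLp.equiv 2 (Fin n → ℂ)).symm (B *ᵥ v))]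

lemma resolvent_det_ne_zero
    (hu_on : ∀ i ∈ Finset.Icc 1 n, ∀ j ∈ Finset.Icc 1 n,
      u i ⬝ᵥ u j = if i = j then 1 else 0)
    (hu_eig : ∀ i ∈ Finset.Icc 1 n, A *ᵥ u i = lam i • u i)
    (hn : 0 < n)
    (z : ℂ) {c : ℝ} (hc : 0 < c)
    (hz : ∀ i ∈ Finset.Icc 1 n, c ≤ ‖z - lam i‖) :
    (z • (1 : Matrix (Fin n) (Fin n) ℂ) - A.map Complex.ofReal).det ≠ 0 := by
  intro hdet
  obtain ⟨v, hv0, hv⟩ := (Matrix.exists_mulVec_eq_zero_iff).2 hdet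
  have hlow := resolvent_lower_bound A lam u hu_on hu_eig hn z hc hz v
  rw [hv] at hlow
  have h0 : ‖(WithLp.equiv 2 (Fin n → ℂ)).symm (0 : Fin n → ℂ)‖ = 0 := by
    simp
  rw [h0] at hlow
  have hx : ‖(WithLp.equiv 2 (Fin n → ℂ)).symm v‖ = 0 := by
    nlinarith [norm_nonneg ((WithLp.equiv 2 (Fin n → ℂ)).symm v)]
  apply hv0
  have := norm_eq_zero.1 hx
  funext j
  exact congrFun (congrArg (WithLp.equiv 2 (Fin n → ℂ)) this) j

lemma res_specNorm_le
    (hu_on : ∀ i ∈ Finset.Icc 1 n, ∀ j ∈ Finset.Icc 1 n,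
      u i ⬝ᵥ u j = if i = j then 1 else 0)
    (hu_eig : ∀ i ∈ Finset.Icc 1 n, A *ᵥ u i = lam i • u i)
    (hn : 0 < n)
    (z : ℂ) {c : ℝ} (hc : 0 < c)
    (hz : ∀ i ∈ Finset.Icc 1 n, c ≤ ‖z - lam i‖) :
    specNorm (res A z) ≤ 1 / c := by
  have hdet := resolvent_det_ne_zero A lam u hu_on hu_eig hn z hc hz
  rw [res]
  apply specNorm_le_bound _ (by positivity)
  intro v
  set B : Matrix (Fin n) (Fin n) ℂ := z • 1 - A.map Complex.ofReal with hBdef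
  have hBv : B *ᵥ (B⁻¹ *ᵥ v) = v := by
    rw [Matrix.mulVec_mulVec, Matrix.mul_nonsing_inv _ (isUnit_iff_ne_zero.2 hdet),
      Matrix.one_mulVec]
  have hlow := resolvent_lower_bound A lam u hu_on hu_eig hn z hc hz (B⁻¹ *ᵥ v)
  rw [hBv] at hlow
  rw [div_mul_eq_mul_div, le_div_iff₀ hc]
  nlinarith [hlow]

lemma continuous_specNorm {m k : ℕ} :
    Continuous fun M : Matrix (Fin m) (Fin k) ℂ => specNorm M := by
  have hL : Continuous fun M : Matrix (Fin m) (Fin k) ℂ =>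
      ((Matrix.toEuclideanLin.trans LinearMap.toContinuousLinearMap).toLinearMap M) :=
    LinearMap.continuous_of_finiteDimensional _
  exact hL.norm

lemma continuous_res (x₀ : ℝ)
    (hdet : ∀ t : ℝ, (((x₀ : ℂ) + t * Complex.I) • (1 : Matrix (Fin n) (Fin n) ℂ)
      - A.map Complex.ofReal).det ≠ 0) :
    Continuous fun t : ℝ => res A ((x₀ : ℂ) + t * Complex.I) := by
  have hzc : Continuous fun t : ℝ => ((x₀ : ℂ) + t * Complex.I) := by continuity
  have hBc : Continuous fun t : ℝ => (((x₀ : ℂ) + t * Complex.I)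
      • (1 : Matrix (Fin n) (Fin n) ℂ) - A.map Complex.ofReal) :=
    (hzc.smul continuous_const).sub continuous_const
  have heq : (fun t : ℝ => res A ((x₀ : ℂ) + t * Complex.I))
      = fun t : ℝ => ((((x₀ : ℂ) + t * Complex.I) • (1 : Matrix (Fin n) (Fin n) ℂ)
        - A.map Complex.ofReal).det)⁻¹ • (((x₀ : ℂ) + t * Complex.I)
        • (1 : Matrix (Fin n) (Fin n) ℂ) - A.map Complex.ofReal).adjugate := by
    funext t
    rw [res, Matrix.inv_def, Ring.inverse_eq_inv']
  rw [heq]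
  exact ((hBc.matrix_det).inv₀ hdet).smul hBc.matrix_adjugate

open Real in
lemma integral_cauchy_bound {a : ℝ} (ha : 0 < a) (C T : ℝ) (hC : 0 ≤ C) :
    ∫ t in (-T)..T, C / (a ^ 2 + t ^ 2) ≤ C * π / a := by
  have hcont : Continuous fun t : ℝ => C / (a ^ 2 + t ^ 2) := by
    apply continuous_const.div (by continuity)
    intro t; positivity
  have hF : ∀ t : ℝ, HasDerivAt (fun s => (C / a) * Real.arctan (s / a))
      (C / (a ^ 2 + t ^ 2)) t := by
    intro t
    have h1 : HasDerivAt (fun s : ℝ => s / a) (1 / a) t := (hasDerivAt_id t).div_const a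
    have h2 := (Real.hasDerivAt_arctan (t / a)).comp t h1
    have h3 := h2.const_mul (C / a)
    refine h3.congr_deriv ?_
    have ha' : a ≠ 0 := ha.ne'
    field_simp
  rw [intervalIntegral.integral_eq_sub_of_hasDerivAt (fun t _ => hF t)
    (hcont.intervalIntegrable _ _)]
  have h4 : Real.arctan (T / a) - Real.arctan (-T / a) ≤ π := by
    have := Real.arctan_lt_pi_div_two (T / a)
    have := Real.neg_pi_div_two_lt_arctan (-T / a)
    linarith
  have h5 : 0 ≤ C / a := by positivity
  calc C / a * Real.arctan (T / a) - C / a * Real.arctan (-T / a)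
      = (C / a) * (Real.arctan (T / a) - Real.arctan (-T / a)) := by ring
    _ ≤ (C / a) * π := mul_le_mul_of_nonneg_left h4 h5
    _ = C * π / a := by ring

lemma complex_abs_line (x₀ t lamᵢ : ℝ) :
    ‖(x₀ : ℂ) + t * Complex.I - lamᵢ‖ = Real.sqrt ((x₀ - lamᵢ) ^ 2 + t ^ 2) := by
  rw [Complex.norm_def, Complex.normSq_apply]
  congr 1
  simp
  ring

end Aux

/-- **Crude bound `M₁ ≤ 8‖E‖/δ_p`** (Remark 4.4 of the paper). Indices are
1-based; `x₀ = λ_p − δ_p/2`, `T = 2σ₁` with `σ₁ = ‖A‖`. -/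
theorem M1_crude_bound
    {n : ℕ} (A E : Matrix (Fin n) (Fin n) ℝ) (hA : A.IsSymm) (hE : E.IsSymm)
    (lam : ℕ → ℝ)
    (hlam_mono : ∀ i ∈ Finset.Icc 1 n, ∀ j ∈ Finset.Icc 1 n, i ≤ j → lam j ≤ lam i)
    (u : ℕ → (Fin n → ℝ))
    (hu_on : ∀ i ∈ Finset.Icc 1 n, ∀ j ∈ Finset.Icc 1 n,
      u i ⬝ᵥ u j = if i = j then 1 else 0)
    (hu_eig : ∀ i ∈ Finset.Icc 1 n, A *ᵥ u i = lam i • u i)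
    (p : ℕ) (hp1 : 1 ≤ p) (hpn : p < n)
    (δp : ℝ) (hδp : δp = lam p - lam (p + 1)) (hδp_pos : 0 < δp)
    (x₀ T : ℝ) (hx₀ : x₀ = lam p - δp / 2) (hT : T = 2 * specNorm A)
    (M1 : ℝ)
    (hM1 : M1 = ∫ t in (-T)..T, specNorm
      (res A (x₀ + t * Complex.I) * E.map Complex.ofReal
        * res A (x₀ + t * Complex.I))) :
    M1 ≤ 8 * specNorm E / δp := by
  have hn : 0 < n := lt_of_le_of_lt (Nat.zero_le p) hpn
  set a : ℝ := δp / 2 with ha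
  have ha0 : 0 < a := by positivity
  have hpI : p ∈ Finset.Icc 1 n := by
    simp [hp1, hpn.le]
  have hp1I : p + 1 ∈ Finset.Icc 1 n := by
    simp [Nat.succ_le_of_lt hpn]
  -- gap bound
  have hgap : ∀ i ∈ Finset.Icc 1 n, a ≤ |x₀ - lam i| := by
    intro i hi
    rcases le_or_gt i p with h | h
    · have hmono := hlam_mono i hi p hpI h
      rw [abs_of_nonpos (by rw [hx₀]; linarith)]
      rw [hx₀]; linarith
    · have hmono := hlam_mono (p + 1) hp1I i hi h
      rw [abs_of_nonneg (by rw [hx₀]; linarith)]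
      rw [hx₀]; linarith
  have hct : ∀ t : ℝ, 0 < Real.sqrt (a ^ 2 + t ^ 2) := by
    intro t
    exact Real.sqrt_pos.2 (add_pos_of_pos_of_nonneg (pow_pos ha0 2) (sq_nonneg t))
  have hzt : ∀ t : ℝ, ∀ i ∈ Finset.Icc 1 n,
      Real.sqrt (a ^ 2 + t ^ 2) ≤ ‖((x₀ : ℂ) + t * Complex.I) - lam i‖ := by
    intro t i hi
    rw [complex_abs_line]
    apply Real.sqrt_le_sqrt
    have h1 := hgap i hi
    nlinarith [sq_abs (x₀ - lam i), abs_nonneg (x₀ - lam i)]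
  have hdet : ∀ t : ℝ, ((((x₀ : ℂ) + t * Complex.I)) • (1 : Matrix (Fin n) (Fin n) ℂ)
      - A.map Complex.ofReal).det ≠ 0 :=
    fun t => resolvent_det_ne_zero A lam u hu_on hu_eig hn _ (hct t) (hzt t)
  have hres : ∀ t : ℝ, specNorm (res A ((x₀ : ℂ) + t * Complex.I))
      ≤ 1 / Real.sqrt (a ^ 2 + t ^ 2) :=
    fun t => res_specNorm_le A lam u hu_on hu_eig hn _ (hct t) (hzt t)
  -- pointwise bound
  have hpt : ∀ t : ℝ, specNorm (res A ((x₀ : ℂ) + t * Complex.I) * E.map Complex.ofReal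
      * res A ((x₀ : ℂ) + t * Complex.I)) ≤ specNorm E / (a ^ 2 + t ^ 2) := by
    intro t
    set R := res A ((x₀ : ℂ) + t * Complex.I) with hR
    set c := Real.sqrt (a ^ 2 + t ^ 2) with hc
    have hc0 : 0 < c := hct t
    have h1 : specNorm (R * E.map Complex.ofReal * R)
        ≤ specNorm R * specNorm (E.map Complex.ofReal) * specNorm R := by
      calc specNorm (R * E.map Complex.ofReal * R)
          ≤ specNorm (R * E.map Complex.ofReal) * specNorm R := specNorm_mul_le _ _
        _ ≤ specNorm R * specNorm (E.map Complex.ofReal) * specNorm R := by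
            apply mul_le_mul_of_nonneg_right (specNorm_mul_le _ _) (specNorm_nonneg _)
    have h2 : specNorm R * specNorm (E.map Complex.ofReal) * specNorm R
        ≤ (1 / c) * specNorm E * (1 / c) := by
      have hRle := hres t
      have hEle := specNorm_map_ofReal E
      have h1c : (0:ℝ) ≤ 1 / c := by positivity
      apply mul_le_mul
      · apply mul_le_mul hRle hEle (specNorm_nonneg _) h1c
      · exact hRle
      · exact specNorm_nonneg _
      · exact mul_nonneg h1c (specNorm_nonneg _)
    have h3 : (1 / c) * specNorm E * (1 / c) = specNorm E / (a ^ 2 + t ^ 2) := by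
      rw [hc]
      rw [show (1 / Real.sqrt (a ^ 2 + t ^ 2)) * specNorm E * (1 / Real.sqrt (a ^ 2 + t ^ 2))
          = specNorm E / (Real.sqrt (a ^ 2 + t ^ 2) ^ 2) by ring]
      rw [Real.sq_sqrt (by positivity)]
    linarith
  -- continuity and integrability
  have hfc : Continuous fun t : ℝ => specNorm (res A ((x₀ : ℂ) + t * Complex.I)
      * E.map Complex.ofReal * res A ((x₀ : ℂ) + t * Complex.I)) := by
    have hrc := continuous_res A x₀ hdet
    exact continuous_specNorm.comp ((hrc.matrix_mul continuous_const).matrix_mul hrc)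
  have hgc : Continuous fun t : ℝ => specNorm E / (a ^ 2 + t ^ 2) := by
    apply continuous_const.div (by continuity)
    intro t
    exact (add_pos_of_pos_of_nonneg (pow_pos ha0 2) (sq_nonneg t)).ne'
  have hT0 : 0 ≤ T := by rw [hT]; linarith [specNorm_nonneg A]
  have hmono : (∫ t in (-T)..T, specNorm (res A ((x₀ : ℂ) + t * Complex.I)
        * E.map Complex.ofReal * res A ((x₀ : ℂ) + t * Complex.I)))
      ≤ ∫ t in (-T)..T, specNorm E / (a ^ 2 + t ^ 2) := by
    apply intervalIntegral.integral_mono_on (by linarith)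
      (hfc.intervalIntegrable _ _) (hgc.intervalIntegrable _ _)
    intro t _
    exact hpt t
  rw [hM1]
  have hπ := Real.pi_le_four
  have hπ0 := Real.pi_pos
  have hE0 := specNorm_nonneg E
  calc (∫ t in (-T)..T, specNorm (res A (x₀ + t * Complex.I)
        * E.map Complex.ofReal * res A (x₀ + t * Complex.I)))
      ≤ ∫ t in (-T)..T, specNorm E / (a ^ 2 + t ^ 2) := hmono
    _ ≤ specNorm E * Real.pi / a := integral_cauchy_bound ha0 _ T hE0
    _ ≤ 8 * specNorm E / δp := by
        rw [ha]
        rw [div_le_div_iff₀ (by positivity) hδp_pos]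
        have hkey : specNorm E * Real.pi * δp ≤ specNorm E * 4 * δp :=
          mul_le_mul_of_nonneg_right (mul_le_mul_of_nonneg_left hπ hE0) hδp_pos.le
        linarith
end

section
/- Let 1 ≤ r ≤ n, let x₀ be a real number and δ > 0, T > 0 with δ ≤ 2T, and suppose |x₀ − λ_i| ≥ δ/2 for all 1 ≤ i ≤ r. Set x := max_{1≤i,j≤r} |u_iᵀ E u_j|. Then ∫_{−T}^{T} ‖ Σ_{1≤i,j≤r} ( (u_iᵀ E u_j) / ((x₀+it−λ_i)(x₀+it−λ_j)) ) u_i u_jᵀ ‖ dt ≤ 8 r² x / δ. -/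
open Matrix

lemma specNorm_sum_le {𝕜 : Type*} [RCLike 𝕜] {m n : ℕ} {ι : Type*} (s : Finset ι)
    (f : ι → Matrix (Fin m) (Fin n) 𝕜) :
    specNorm (∑ i ∈ s, f i) ≤ ∑ i ∈ s, specNorm (f i) := by
  simp only [specNorm, map_sum]
  exact norm_sum_le _ _

lemma specNorm_smul {𝕜 : Type*} [RCLike 𝕜] {m n : ℕ} (c : 𝕜)
    (M : Matrix (Fin m) (Fin n) 𝕜) :
    specNorm (c • M) = ‖c‖ * specNorm M := by
  simp only [specNorm, _root_.map_smul]
  exact norm_smul c (LinearMap.toContinuousLinearMap (Matrix.toEuclideanLin M))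

lemma euclidean_norm_ofReal {n : ℕ} (a : Fin n → ℝ) (ha : a ⬝ᵥ a = 1) :
    ‖((WithLp.equiv 2 (Fin n → ℂ)).symm (fun j => (a j : ℂ)))‖ = 1 := by
  rw [EuclideanSpace.norm_eq]
  have : ∀ j, ‖((WithLp.equiv 2 (Fin n → ℂ)).symm (fun j => (a j : ℂ))) j‖ ^ 2 = a j * a j := by
    intro j
    simp [Complex.norm_real, sq_abs, sq]
  simp only [this]
  rw [show ∑ j, a j * a j = a ⬝ᵥ a from rfl, ha, Real.sqrt_one]

lemma specNorm_vecMulVec_le {n : ℕ} (a b : Fin n → ℝ) (ha : a ⬝ᵥ a = 1) (hb : b ⬝ᵥ b = 1) :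
    specNorm ((vecMulVec a b).map Complex.ofReal) ≤ 1 := by
  apply ContinuousLinearMap.opNorm_le_bound _ zero_le_one
  intro v
  have hav : (LinearMap.toContinuousLinearMap
      (Matrix.toEuclideanLin ((vecMulVec a b).map Complex.ofReal))) v
      = (∑ j, (b j : ℂ) * v j) • ((WithLp.equiv 2 (Fin n → ℂ)).symm (fun j => (a j : ℂ))) := by
    apply PiLp.ext
    intro i
    show ((vecMulVec a b).map Complex.ofReal *ᵥ (fun j => v j)) i
        = (∑ j, (b j : ℂ) * v j) * (a i : ℂ)
    simp only [Matrix.mulVec, dotProduct, Matrix.map_apply, vecMulVec,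
      Matrix.of_apply, Complex.ofReal_mul, Finset.sum_mul]
    refine Finset.sum_congr rfl fun j _ => ?_
    ring
  rw [hav, norm_smul, euclidean_norm_ofReal a ha, mul_one, one_mul]
  have hinner : (∑ j, (b j : ℂ) * v j)
      = inner ℂ ((WithLp.equiv 2 (Fin n → ℂ)).symm (fun j => (b j : ℂ))) v := by
    rw [PiLp.inner_apply]
    refine Finset.sum_congr rfl fun j _ => ?_
    rw [RCLike.inner_apply']
    show (b j : ℂ) * v j = (starRingEnd ℂ) ((b j : ℂ)) * v j
    rw [Complex.conj_ofReal]
  rw [hinner]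
  calc ‖(inner ℂ ((WithLp.equiv 2 (Fin n → ℂ)).symm (fun j => (b j : ℂ))) v : ℂ)‖
      ≤ ‖((WithLp.equiv 2 (Fin n → ℂ)).symm (fun j => (b j : ℂ)))‖ * ‖v‖ := norm_inner_le_norm _ _
    _ = ‖v‖ := by rw [euclidean_norm_ofReal b hb, one_mul]

/-- integral of `1/(c² + t²)`. -/
lemma integral_inv_c_sq_add_sq (c T : ℝ) (hc : 0 < c) :
    (∫ t in (-T)..T, 1 / (c ^ 2 + t ^ 2))
      = (1 / c) * Real.arctan (T / c) - (1 / c) * Real.arctan (-T / c) := by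
  have hF : ∀ t ∈ Set.uIcc (-T) T,
      HasDerivAt (fun s : ℝ => (1 / c) * Real.arctan (s / c)) (1 / (c ^ 2 + t ^ 2)) t := by
    intro t _
    have h1 : HasDerivAt (fun s : ℝ => s / c) (1 / c) t := by
      simpa using (hasDerivAt_id t).div_const c
    have h2 := (Real.hasDerivAt_arctan (t / c)).comp t h1
    have h3 := h2.const_mul (1 / c)
    refine h3.congr_deriv ?_
    have h4 : (1 : ℝ) + (t / c) ^ 2 = (c ^ 2 + t ^ 2) / c ^ 2 := by
      field_simp
    rw [h4]
    have h5 : (0:ℝ) < c ^ 2 + t ^ 2 := by positivity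
    field_simp
  have hint : IntervalIntegrable (fun t : ℝ => 1 / (c ^ 2 + t ^ 2))
      MeasureTheory.volume (-T) T := by
    apply Continuous.intervalIntegrable
    apply continuous_const.div (by fun_prop)
    intro t; positivity
  simpa using intervalIntegral.integral_eq_sub_of_hasDerivAt hF hint

/-- **Bound on the `(i,j ≤ r)` block of `M₁`.**  Indices are 1-based. -/
theorem M1_top_block_bound
    {n : ℕ} (A E : Matrix (Fin n) (Fin n) ℝ) (hA : A.IsSymm) (hE : E.IsSymm)
    (lam : ℕ → ℝ)
    (hlam_mono : ∀ i ∈ Finset.Icc 1 n, ∀ j ∈ Finset.Icc 1 n, i ≤ j → lam j ≤ lam i)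
    (u : ℕ → (Fin n → ℝ))
    (hu_on : ∀ i ∈ Finset.Icc 1 n, ∀ j ∈ Finset.Icc 1 n,
      u i ⬝ᵥ u j = if i = j then 1 else 0)
    (hu_eig : ∀ i ∈ Finset.Icc 1 n, A *ᵥ u i = lam i • u i)
    (r : ℕ) (hr1 : 1 ≤ r) (hrn : r ≤ n)
    (x₀ : ℝ) (δ T : ℝ) (hδ : 0 < δ) (hT : 0 < T) (hδT : δ ≤ 2 * T)
    (hsep : ∀ i ∈ Finset.Icc 1 r, δ / 2 ≤ |x₀ - lam i|)
    (x : ℝ)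
    (hx : x = (Finset.Icc 1 r ×ˢ Finset.Icc 1 r).sup'
      (Finset.Nonempty.product (Finset.nonempty_Icc.mpr hr1)
        (Finset.nonempty_Icc.mpr hr1))
      (fun q => |u q.1 ⬝ᵥ E *ᵥ u q.2|)) :
    (∫ t in (-T)..T, specNorm
      (∑ i ∈ Finset.Icc 1 r, ∑ j ∈ Finset.Icc 1 r,
        (((u i ⬝ᵥ E *ᵥ u j : ℝ) : ℂ) /
            (((x₀ : ℂ) + t * Complex.I - (lam i : ℂ))
              * ((x₀ : ℂ) + t * Complex.I - (lam j : ℂ)))) •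
          (vecMulVec (u i) (u j)).map Complex.ofReal))
      ≤ 8 * (r : ℝ) ^ 2 * x / δ := by
  set c : ℝ := δ / 2 with hcdef
  have hc : 0 < c := by positivity
  have hsub : Finset.Icc 1 r ⊆ Finset.Icc 1 n := Finset.Icc_subset_Icc_right hrn
  have hnorm1 : ∀ i ∈ Finset.Icc 1 r, u i ⬝ᵥ u i = 1 := fun i hi => by
    simpa using hu_on i (hsub hi) i (hsub hi)
  have hq : ∀ i ∈ Finset.Icc 1 r, ∀ j ∈ Finset.Icc 1 r, |u i ⬝ᵥ E *ᵥ u j| ≤ x := by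
    intro i hi j hj
    rw [hx]
    exact Finset.le_sup' (fun q => |u q.1 ⬝ᵥ E *ᵥ u q.2|) (Finset.mk_mem_product hi hj)
  have hone : (1 : ℕ) ∈ Finset.Icc 1 r := Finset.mem_Icc.mpr ⟨le_refl 1, hr1⟩
  have hxnn : 0 ≤ x := le_trans (abs_nonneg _) (hq 1 hone 1 hone)
  -- denominator lower bounds
  have hdenom : ∀ i ∈ Finset.Icc 1 r, ∀ t : ℝ,
      Real.sqrt (c ^ 2 + t ^ 2) ≤ ‖(x₀ : ℂ) + t * Complex.I - (lam i : ℂ)‖ := by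
    intro i hi t
    have hre : ((x₀ : ℂ) + t * Complex.I - (lam i : ℂ)).re = x₀ - lam i := by simp
    have him : ((x₀ : ℂ) + t * Complex.I - (lam i : ℂ)).im = t := by simp
    rw [Complex.norm_def, Complex.normSq_apply, hre, him]
    apply Real.sqrt_le_sqrt
    have h1 := hsep i hi
    have h2 : (δ / 2) ^ 2 ≤ (x₀ - lam i) ^ 2 := by
      nlinarith [abs_nonneg (x₀ - lam i), sq_abs (x₀ - lam i)]
    simp only [hcdef]
    nlinarith
  have hdenprod : ∀ t : ℝ, ∀ i ∈ Finset.Icc 1 r, ∀ j ∈ Finset.Icc 1 r,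
      c ^ 2 + t ^ 2 ≤ ‖(x₀ : ℂ) + t * Complex.I - (lam i : ℂ)‖
        * ‖(x₀ : ℂ) + t * Complex.I - (lam j : ℂ)‖ := by
    intro t i hi j hj
    have hkey : Real.sqrt (c ^ 2 + t ^ 2) * Real.sqrt (c ^ 2 + t ^ 2) = c ^ 2 + t ^ 2 :=
      Real.mul_self_sqrt (by positivity)
    calc c ^ 2 + t ^ 2 = Real.sqrt (c ^ 2 + t ^ 2) * Real.sqrt (c ^ 2 + t ^ 2) := hkey.symm
      _ ≤ _ := mul_le_mul (hdenom i hi t) (hdenom j hj t) (Real.sqrt_nonneg _)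
          (norm_nonneg _)
  -- pointwise bound
  have hpt : ∀ t : ℝ, specNorm
      (∑ i ∈ Finset.Icc 1 r, ∑ j ∈ Finset.Icc 1 r,
        (((u i ⬝ᵥ E *ᵥ u j : ℝ) : ℂ) /
            (((x₀ : ℂ) + t * Complex.I - (lam i : ℂ))
              * ((x₀ : ℂ) + t * Complex.I - (lam j : ℂ)))) •
          (vecMulVec (u i) (u j)).map Complex.ofReal)
      ≤ (r : ℝ) ^ 2 * x / (c ^ 2 + t ^ 2) := by
    intro t
    have hct : (0:ℝ) < c ^ 2 + t ^ 2 := by positivity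
    have hterm : ∀ i ∈ Finset.Icc 1 r, ∀ j ∈ Finset.Icc 1 r,
        specNorm ((((u i ⬝ᵥ E *ᵥ u j : ℝ) : ℂ) /
            (((x₀ : ℂ) + t * Complex.I - (lam i : ℂ))
              * ((x₀ : ℂ) + t * Complex.I - (lam j : ℂ)))) •
          (vecMulVec (u i) (u j)).map Complex.ofReal)
        ≤ x / (c ^ 2 + t ^ 2) := by
      intro i hi j hj
      rw [specNorm_smul]
      have h1 : specNorm ((vecMulVec (u i) (u j)).map Complex.ofReal) ≤ 1 :=
        specNorm_vecMulVec_le (u i) (u j) (hnorm1 i hi) (hnorm1 j hj)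
      have h2 : ‖(((u i ⬝ᵥ E *ᵥ u j : ℝ) : ℂ) /
            (((x₀ : ℂ) + t * Complex.I - (lam i : ℂ))
              * ((x₀ : ℂ) + t * Complex.I - (lam j : ℂ))))‖ ≤ x / (c ^ 2 + t ^ 2) := by
        rw [norm_div, norm_mul, Complex.norm_real]
        exact div_le_div₀ hxnn (hq i hi j hj) hct (hdenprod t i hi j hj)
      calc _ ≤ ‖(((u i ⬝ᵥ E *ᵥ u j : ℝ) : ℂ) /
            (((x₀ : ℂ) + t * Complex.I - (lam i : ℂ))
              * ((x₀ : ℂ) + t * Complex.I - (lam j : ℂ))))‖ * 1 := by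
            apply mul_le_mul_of_nonneg_left h1 (norm_nonneg _)
        _ = _ := by rw [mul_one]
        _ ≤ x / (c ^ 2 + t ^ 2) := h2
    calc specNorm _ ≤ ∑ i ∈ Finset.Icc 1 r, specNorm
          (∑ j ∈ Finset.Icc 1 r,
            (((u i ⬝ᵥ E *ᵥ u j : ℝ) : ℂ) /
              (((x₀ : ℂ) + t * Complex.I - (lam i : ℂ))
                * ((x₀ : ℂ) + t * Complex.I - (lam j : ℂ)))) •
            (vecMulVec (u i) (u j)).map Complex.ofReal) := specNorm_sum_le _ _
      _ ≤ ∑ i ∈ Finset.Icc 1 r, ∑ j ∈ Finset.Icc 1 r, (x / (c ^ 2 + t ^ 2)) := by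
          apply Finset.sum_le_sum
          intro i hi
          exact le_trans (specNorm_sum_le _ _) (Finset.sum_le_sum (hterm i hi))
      _ = (r : ℝ) ^ 2 * x / (c ^ 2 + t ^ 2) := by
          simp [Finset.sum_const, Nat.card_Icc]
          ring
  -- continuity of the integrand
  have hfc : Continuous (fun t : ℝ => specNorm
      (∑ i ∈ Finset.Icc 1 r, ∑ j ∈ Finset.Icc 1 r,
        (((u i ⬝ᵥ E *ᵥ u j : ℝ) : ℂ) /
            (((x₀ : ℂ) + t * Complex.I - (lam i : ℂ))
              * ((x₀ : ℂ) + t * Complex.I - (lam j : ℂ)))) •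
          (vecMulVec (u i) (u j)).map Complex.ofReal)) := by
    have hM : Continuous (fun t : ℝ =>
        (∑ i ∈ Finset.Icc 1 r, ∑ j ∈ Finset.Icc 1 r,
        (((u i ⬝ᵥ E *ᵥ u j : ℝ) : ℂ) /
            (((x₀ : ℂ) + t * Complex.I - (lam i : ℂ))
              * ((x₀ : ℂ) + t * Complex.I - (lam j : ℂ)))) •
          (vecMulVec (u i) (u j)).map Complex.ofReal)) := by
      apply continuous_finset_sum
      intro i hi
      apply continuous_finset_sum
      intro j hj
      apply Continuous.fun_smul _ continuous_const
      apply Continuous.div continuous_const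
      · fun_prop
      · intro t
        apply mul_ne_zero
        · intro h
          have := congrArg Complex.re h
          simp at this
          have h1 := hsep i hi
          rw [this, abs_zero] at h1
          linarith
        · intro h
          have := congrArg Complex.re h
          simp at this
          have h1 := hsep j hj
          rw [this, abs_zero] at h1
          linarith
    let Φ : Matrix (Fin n) (Fin n) ℂ →ₗ[ℂ]
        (EuclideanSpace ℂ (Fin n) →L[ℂ] EuclideanSpace ℂ (Fin n)) :=
      (LinearMap.toContinuousLinearMap.toLinearMap).comp
        (Matrix.toEuclideanLin.toLinearMap)
    have hΦ : Continuous Φ := Φ.continuous_of_finiteDimensional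
    exact ((hΦ.comp hM).norm)
  -- integrability
  have hfint : IntervalIntegrable (fun t : ℝ => specNorm
      (∑ i ∈ Finset.Icc 1 r, ∑ j ∈ Finset.Icc 1 r,
        (((u i ⬝ᵥ E *ᵥ u j : ℝ) : ℂ) /
            (((x₀ : ℂ) + t * Complex.I - (lam i : ℂ))
              * ((x₀ : ℂ) + t * Complex.I - (lam j : ℂ)))) •
          (vecMulVec (u i) (u j)).map Complex.ofReal))
      MeasureTheory.volume (-T) T := hfc.intervalIntegrable _ _
  have hgint : IntervalIntegrable (fun t : ℝ => (r : ℝ) ^ 2 * x / (c ^ 2 + t ^ 2))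
      MeasureTheory.volume (-T) T := by
    apply Continuous.intervalIntegrable
    apply continuous_const.div (by fun_prop)
    intro t; positivity
  have hTT : -T ≤ T := by linarith
  have hstep1 : (∫ t in (-T)..T, specNorm
      (∑ i ∈ Finset.Icc 1 r, ∑ j ∈ Finset.Icc 1 r,
        (((u i ⬝ᵥ E *ᵥ u j : ℝ) : ℂ) /
            (((x₀ : ℂ) + t * Complex.I - (lam i : ℂ))
              * ((x₀ : ℂ) + t * Complex.I - (lam j : ℂ)))) •
          (vecMulVec (u i) (u j)).map Complex.ofReal))
      ≤ ∫ t in (-T)..T, (r : ℝ) ^ 2 * x / (c ^ 2 + t ^ 2) :=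
    intervalIntegral.integral_mono_on hTT hfint hgint (fun t _ => hpt t)
  have hstep2 : (∫ t in (-T)..T, (r : ℝ) ^ 2 * x / (c ^ 2 + t ^ 2))
      = (r : ℝ) ^ 2 * x * ((1 / c) * Real.arctan (T / c) - (1 / c) * Real.arctan (-T / c)) := by
    rw [← integral_inv_c_sq_add_sq c T hc, ← intervalIntegral.integral_const_mul]
    congr 1
    ext t
    field_simp
  have harct : Real.arctan (T / c) ≤ 2 := by
    have h1 := Real.arctan_lt_pi_div_two (T / c)
    nlinarith [Real.pi_le_four]
  have hstep3 : (r : ℝ) ^ 2 * x * ((1 / c) * Real.arctan (T / c)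
        - (1 / c) * Real.arctan (-T / c)) ≤ 8 * (r : ℝ) ^ 2 * x / δ := by
    rw [show (-T / c) = -(T / c) by ring, Real.arctan_neg]
    have hr2 : (0:ℝ) ≤ (r : ℝ) ^ 2 := by positivity
    have h8 : 8 * (r : ℝ) ^ 2 * x / δ = (r : ℝ) ^ 2 * x * ((1 / c) * 2 + (1 / c) * 2) := by
      rw [hcdef]; field_simp; ring
    rw [h8]
    have hinv : (0:ℝ) ≤ 1 / c := by positivity
    apply mul_le_mul_of_nonneg_left _ (mul_nonneg hr2 hxnn)
    nlinarith [harct, hinv]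
  calc _ ≤ _ := hstep1
    _ = _ := hstep2
    _ ≤ _ := hstep3
end
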